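/- arXiv:2011.04524 — 5 statements merged into one kernel-verified Lean document; each statement's English description precedes it below -/
import Mathlib

section
/- For any permutation rack (X, φ), the rack automorphism φ induces the identity map on rack homology HR_n(X, φ) for all n; more precisely, for any fixed x ∈ X, the degree-raising operator h(w) = x·w satisfies id − φ = d∘h + h∘d on the rack chain complex. -/
/-- Rack chains: free abelian group on `n`-tuples. -/
abbrev CR (X : Type) (n : ℕ) : Type := (Fin n → X) →₀ ℤ

/-- The monomial basis element. -/
noncomputable def mon {X : Type} {n : ℕ} (w : Fin n → X) : CR X n := Finsupp.single w 1

/-- Delete the `(i+1)`-st entry (1-indexed `k = i+1`). -/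
def del {X : Type} {n : ℕ} (w : Fin (n+1) → X) (i : Fin n) : Fin n → X :=
  fun j => if (j : ℕ) < (i : ℕ) then w j.castSucc else w j.succ

/-- Delete the `(i+1)`-st entry and act with it on all later entries. -/
def act {X : Type} (op : X → X → X) {n : ℕ} (w : Fin (n+1) → X) (i : Fin n) : Fin n → X :=
  fun j => if (j : ℕ) < (i : ℕ) then w j.castSucc else op (w i.castSucc) (w j.succ)

/-- Rack differential on a monomial. -/
noncomputable def dMon {X : Type} (op : X → X → X) {n : ℕ} (w : Fin (n+1) → X) : CR X n :=
  ∑ i : Fin n, ((-1 : ℤ) ^ (i : ℕ)) • (mon (del w i) - mon (act op w i))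

/-- The rack differential `CR_{n+1} → CR_n`. -/
noncomputable def d {X : Type} (op : X → X → X) (n : ℕ) : CR X (n+1) →+ CR X n :=
  Finsupp.liftAddHom fun w => zmultiplesHom _ (dMon op w)

/-- Left concatenation `w ↦ x·w`. -/
noncomputable def consHom {X : Type} (x : X) (n : ℕ) : CR X n →+ CR X (n+1) :=
  Finsupp.liftAddHom fun w => zmultiplesHom _ (mon (Fin.cons x w))

/-- Diagonal action of a map `φ` on chains. -/
noncomputable def mapChains {X : Type} (φ : X → X) (n : ℕ) : CR X n →+ CR X n :=
  Finsupp.liftAddHom fun w => zmultiplesHom _ (mon (φ ∘ w))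

/-- Cycles. -/
noncomputable def ZC {X : Type} (op : X → X → X) : (n : ℕ) → AddSubgroup (CR X n)
  | 0 => ⊤
  | (m+1) => (d op m).ker

/-- Boundaries. -/
noncomputable def BC {X : Type} (op : X → X → X) (n : ℕ) : AddSubgroup (CR X n) :=
  (d op n).range

/-- Rack homology. -/
abbrev HR (X : Type) (op : X → X → X) (n : ℕ) : Type :=
  ZC op n ⧸ ((BC op n).addSubgroupOf (ZC op n))

/-- The rack operation of a permutation rack. -/
def permOp {X : Type} (φ : X ≃ X) : X → X → X := fun _ y => φ y

/-- Multiplication by an element of `ℤX`. -/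
noncomputable def mulChain {X : Type} (v : X →₀ ℤ) (n : ℕ) : CR X n →+ CR X (n+1) :=
  ∑ x ∈ v.support, v x • consHom x n

lemma d_mon {X : Type} (op : X → X → X) {n : ℕ} (w : Fin (n+1) → X) :
    d op n (mon w) = dMon op w := by
  simp [d, mon, Finsupp.liftAddHom_apply_single]

lemma consHom_mon {X : Type} (x : X) {n : ℕ} (w : Fin n → X) :
    consHom x n (mon w) = mon (Fin.cons x w) := by
  simp [consHom, mon, Finsupp.liftAddHom_apply_single]

lemma mapChains_mon {X : Type} (φ : X → X) {n : ℕ} (w : Fin n → X) :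
    mapChains φ n (mon w) = mon (φ ∘ w) := by
  simp [mapChains, mon, Finsupp.liftAddHom_apply_single]

lemma del_cons_zero {X : Type} {n : ℕ} (x : X) (w : Fin (n+1) → X) :
    del (Fin.cons x w) ⟨0, Nat.succ_pos n⟩ = w := by
  funext j; simp [del]

lemma act_cons_zero {X : Type} {n : ℕ} (φ : X ≃ X) (x : X) (w : Fin (n+1) → X) :
    act (permOp φ) (Fin.cons x w) ⟨0, Nat.succ_pos n⟩ = φ ∘ w := by
  funext j; simp [act, permOp]

lemma del_cons_succ {X : Type} {n : ℕ} (x : X) (w : Fin (n+1) → X) (i : Fin n) :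
    del (Fin.cons x w) i.succ = Fin.cons x (del w i) := by
  funext j
  induction j using Fin.cases with
  | zero => simp [del]
  | succ m =>
    simp only [del, Fin.val_succ, Nat.succ_lt_succ_iff, Fin.cons_succ]
    by_cases h : (m : ℕ) < (i : ℕ) <;>
      simp [h, ← Fin.succ_castSucc, Fin.cons_succ]

lemma act_cons_succ {X : Type} {n : ℕ} (φ : X ≃ X) (x : X) (w : Fin (n+1) → X) (i : Fin n) :
    act (permOp φ) (Fin.cons x w) i.succ = Fin.cons x (act (permOp φ) w i) := by
  funext j
  induction j using Fin.cases with
  | zero => simp [act]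
  | succ m =>
    simp only [act, permOp, Fin.val_succ, Nat.succ_lt_succ_iff, Fin.cons_succ]
    by_cases h : (m : ℕ) < (i : ℕ) <;>
      simp [h, ← Fin.succ_castSucc, Fin.cons_succ]

lemma key {X : Type} (φ : X ≃ X) (x : X) {n : ℕ} (w : Fin (n+1) → X) :
    dMon (permOp φ) (Fin.cons x w) =
      mon w - mon (φ ∘ w) - consHom x n (dMon (permOp φ) w) := by
  rw [dMon, Fin.sum_univ_succ]
  have h0 : (0 : Fin (n+1)) = ⟨0, Nat.succ_pos n⟩ := rfl
  rw [h0, del_cons_zero, act_cons_zero]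
  rw [dMon, map_sum]
  simp only [map_zsmul, map_sub, consHom_mon, del_cons_succ, act_cons_succ,
    Fin.val_succ, pow_succ, pow_zero, one_smul, mul_neg_one, neg_smul,
    Finset.sum_neg_distrib]
  abel

lemma homotopy {X : Type} (φ : X ≃ X) (x : X) (n : ℕ) (w : CR X (n+1)) :
    w - mapChains (⇑φ) (n+1) w =
      d (permOp φ) (n+1) (consHom x (n+1) w) + consHom x n (d (permOp φ) n w) := by
  induction w using Finsupp.induction_linear with
  | zero => simp
  | add f g hf hg =>
    simp only [map_add]
    rw [add_sub_add_comm, hf, hg]; abel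
  | single a b =>
    have hs : (Finsupp.single a b : CR X (n+1)) = b • mon a := by
      simp [mon, Finsupp.smul_single]
    rw [hs, map_zsmul, map_zsmul, map_zsmul, map_zsmul, map_zsmul, ← smul_sub, ← smul_add]
    congr 1
    rw [mapChains_mon, consHom_mon, d_mon, d_mon, key]
    abel

/-- The permutation `φ` induces the identity on rack homology: for any fixed `x`, the
operator `h(w) = x·w` is a chain homotopy between `id` and `φ`; consequently for every
cycle `c` the chain `φ(c) − c` is a boundary. -/
theorem permutation_induces_identity (X : Type) (φ : X ≃ X) :
    (∀ (n : ℕ) (x : X) (w : CR X (n+1)),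
      w - mapChains (⇑φ) (n+1) w =
        d (permOp φ) (n+1) (consHom x (n+1) w) + consHom x n (d (permOp φ) n w)) ∧
    (∀ (n : ℕ) (c : CR X n), c ∈ ZC (permOp φ) n →
      mapChains (⇑φ) n c - c ∈ BC (permOp φ) n) := by
  refine ⟨fun n x w => homotopy φ x n w, fun n c hc => ?_⟩
  match n with
  | 0 =>
    have hid : mapChains (⇑φ) 0 c = c := by
      have h : mapChains (⇑φ) 0 = AddMonoidHom.id _ := by
        refine Finsupp.addHom_ext fun w b => ?_
        simp only [mapChains, Finsupp.liftAddHom_apply_single, zmultiplesHom_apply,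
          AddMonoidHom.id_apply, mon, Finsupp.smul_single, smul_eq_mul, mul_one]
        congr 1
        funext j; exact j.elim0
      rw [h]; rfl
    rw [hid, sub_self]
    exact (BC (permOp φ) 0).zero_mem
  | (m+1) =>
    by_cases hX : Nonempty X
    · obtain ⟨x⟩ := hX
      have hd : d (permOp φ) m c = 0 := hc
      have := homotopy φ x m c
      rw [hd, map_zero, add_zero] at this
      refine ⟨-(consHom x (m+1) c), ?_⟩
      rw [map_neg, ← this]; abel
    · have hc0 : c = 0 := by
        ext w
        exact absurd ⟨w 0⟩ hX
      rw [hc0]; simp only [map_zero, sub_zero]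
      exact (BC (permOp φ) (m+1)).zero_mem
end

section
/- Let X = ℤ × S with the free permutation φ(n, s) = (n+1, s). If a chain c in CR_•(X, φ) is such that c − φ(c) is a ℤ-linear combination of monomials whose first entry lies in {0} × S, then c = 0. -/
/-- The shift map of the free permutation rack `ℤ × S`. -/
def shift (S : Type) : ℤ × S → ℤ × S := fun p => (p.1 + 1, p.2)


lemma mapChains_eq_mapDomain {X : Type} (φ : X → X) (n : ℕ) (c : CR X n) :
    mapChains φ n c = Finsupp.mapDomain (fun w => φ ∘ w) c := by
  rw [mapChains, Finsupp.liftAddHom_apply, Finsupp.mapDomain]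
  refine Finsupp.sum_congr fun w _ => ?_
  show (c w) • mon (φ ∘ w) = _
  rw [mon, Finsupp.smul_single, smul_eq_mul, mul_one]

lemma shift_inj (S : Type) : Function.Injective (shift S) := by
  intro a b hab
  simpa [shift, Prod.ext_iff] using hab

/-- On the free permutation rack `(ℤ × S, +1)`: if `c − φ(c)` is supported on monomials
whose first entry lies in `{0} × S`, then `c = 0`. -/
theorem free_rack_vanishing_criterion (S : Type) (n : ℕ) (c : CR (ℤ × S) (n+1))
    (h : ∀ w ∈ (c - mapChains (shift S) (n+1) c).support, (w 0).1 = 0) :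
    c = 0 := by
  by_contra hc
  have hsupp : c.support.Nonempty := Finsupp.support_nonempty_iff.mpr hc
  -- the key relation: if (w 0).1 ≠ 0 then c w = c (downshift w)
  have hinj : Function.Injective (fun w : Fin (n+1) → ℤ × S => shift S ∘ w) := by
    intro a b hab
    funext j
    exact shift_inj S (congrFun hab j)
  have key : ∀ w : Fin (n+1) → ℤ × S, (w 0).1 ≠ 0 →
      c w = c (fun j => ((w j).1 - 1, (w j).2)) := by
    intro w hw
    have hnot : w ∉ (c - mapChains (shift S) (n+1) c).support := fun hmem => hw (h w hmem)
    rw [Finsupp.notMem_support_iff, Finsupp.sub_apply, sub_eq_zero] at hnot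
    rw [hnot, mapChains_eq_mapDomain]
    have hw' : w = (fun v : Fin (n+1) → ℤ × S => shift S ∘ v)
        (fun j => ((w j).1 - 1, (w j).2)) := by
      funext j
      simp [shift]
    conv_lhs => rw [hw']
    exact Finsupp.mapDomain_apply hinj c _
  -- consider the finite set of first coordinates of first entries
  set T : Finset ℤ := c.support.image (fun w => (w 0).1) with hT
  have hTne : T.Nonempty := hsupp.image _
  set m := T.min' hTne with hm
  set M := T.max' hTne with hM
  have hmM : m ≤ M := T.min'_le _ (T.max'_mem hTne)
  -- m = 0
  have hm0 : m = 0 := by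
    by_contra hm0
    obtain ⟨w, hwmem, hweq⟩ := Finset.mem_image.mp (T.min'_mem hTne)
    have hcw : c w ≠ 0 := Finsupp.mem_support_iff.mp hwmem
    have hne : (w 0).1 ≠ 0 := by rw [hweq]; exact hm0
    have := key w hne
    have hmem' : (fun j => ((w j).1 - 1, (w j).2)) ∈ c.support := by
      rw [Finsupp.mem_support_iff, ← this]; exact hcw
    have : m - 1 ∈ T := by
      refine Finset.mem_image.mpr ⟨_, hmem', ?_⟩
      simp [hweq, hm]
    have := T.min'_le _ this
    omega
  -- M = -1
  have hM1 : M = -1 := by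
    by_contra hM1
    obtain ⟨w, hwmem, hweq⟩ := Finset.mem_image.mp (T.max'_mem hTne)
    have hcw : c w ≠ 0 := Finsupp.mem_support_iff.mp hwmem
    have hne : ((shift S ∘ w) 0).1 ≠ 0 := by
      simp only [Function.comp, shift, hweq]
      omega
    have hkey := key (shift S ∘ w) hne
    have hdown : (fun j => (((shift S ∘ w) j).1 - 1, ((shift S ∘ w) j).2)) = w := by
      funext j
      simp [shift]
    rw [hdown] at hkey
    have hmem' : shift S ∘ w ∈ c.support := by
      rw [Finsupp.mem_support_iff, hkey]; exact hcw
    have : M + 1 ∈ T := by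
      refine Finset.mem_image.mpr ⟨_, hmem', ?_⟩
      simp [shift, hweq, hM]
    have := T.le_max' _ this
    omega
  omega
end

section
/- For the free permutation rack (ℤ × S, +1) on a set S, every n-cycle with n ≥ 2 is, modulo boundaries, represented by an element of ⟨S̄⟩ ⊗ CR_{n−1}, i.e., a linear combination Σ (s−t)·c_s of chains whose first tensor factor is an augmentation-zero combination of elements of {0} × S. -/
/-- The rack operation of the free permutation rack `ℤ × S`. -/
def shiftOp (S : Type) : ℤ × S → ℤ × S → ℤ × S := fun _ p => (p.1 + 1, p.2)
namespace FPR

variable {S : Type}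

/-- The shift on `ℤ × S`. -/
def sh (S : Type) : ℤ × S → ℤ × S := fun p => (p.1 + 1, p.2)

/-- The inverse shift. -/
def shInv (S : Type) : ℤ × S → ℤ × S := fun p => (p.1 - 1, p.2)

@[simp] lemma sh_shInv (p : ℤ × S) : sh S (shInv S p) = p := by
  simp [sh, shInv]

@[simp] lemma shInv_sh (p : ℤ × S) : shInv S (sh S p) = p := by
  simp [sh, shInv]

@[simp] lemma d_single {X : Type} (op : X → X → X) (m : ℕ) (w : Fin (m+1) → X) (z : ℤ) :
    d op m (Finsupp.single w z) = z • dMon op w := by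
  simp [d]

@[simp] lemma d_mon {X : Type} (op : X → X → X) (m : ℕ) (w : Fin (m+1) → X) :
    d op m (mon w) = dMon op w := by
  simp [mon]

@[simp] lemma consHom_single {X : Type} (x : X) (m : ℕ) (w : Fin m → X) (z : ℤ) :
    consHom x m (Finsupp.single w z) = z • mon (Fin.cons x w) := by
  simp [consHom]

@[simp] lemma consHom_mon {X : Type} (x : X) (m : ℕ) (w : Fin m → X) :
    consHom x m (mon w) = mon (Fin.cons x w) := by
  simp [mon]

@[simp] lemma mapChains_single {X : Type} (φ : X → X) (m : ℕ) (w : Fin m → X) (z : ℤ) :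
    mapChains φ m (Finsupp.single w z) = z • mon (φ ∘ w) := by
  simp [mapChains]

@[simp] lemma mapChains_mon {X : Type} (φ : X → X) (m : ℕ) (w : Fin m → X) :
    mapChains φ m (mon w) = mon (φ ∘ w) := by
  simp [mon]

lemma del_cons_zero {X : Type} {m : ℕ} (x : X) (w : Fin (m+1) → X) :
    del (Fin.cons x w) 0 = w := by
  funext j
  simp [del]

lemma act_cons_zero {m : ℕ} (x : ℤ × S) (w : Fin (m+1) → ℤ × S) :
    act (shiftOp S) (Fin.cons x w) 0 = sh S ∘ w := by
  funext j
  simp [act, shiftOp, sh]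

lemma del_cons_succ {X : Type} {m : ℕ} (x : X) (w : Fin (m+1) → X) (i : Fin m) :
    del (Fin.cons x w) i.succ = Fin.cons x (del w i) := by
  funext j
  induction j using Fin.cases with
  | zero => simp [del]
  | succ j =>
    simp only [del, Fin.val_succ, add_lt_add_iff_right, Fin.cons_succ]
    split
    · rw [show (Fin.castSucc (Fin.succ j)) = (Fin.succ (Fin.castSucc j)) by rfl, Fin.cons_succ]
    · rfl

lemma act_cons_succ {m : ℕ} (x : ℤ × S) (w : Fin (m+1) → ℤ × S) (i : Fin m) :
    act (shiftOp S) (Fin.cons x w) i.succ = Fin.cons x (act (shiftOp S) w i) := by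
  funext j
  induction j using Fin.cases with
  | zero => simp [act]
  | succ j =>
    simp only [act, Fin.val_succ, add_lt_add_iff_right, Fin.cons_succ]
    split
    · rw [show (Fin.castSucc (Fin.succ j)) = (Fin.succ (Fin.castSucc j)) by rfl, Fin.cons_succ]
    · simp [shiftOp]

/-- Key recursion at the monomial level: `d(x·w) = w - φ(w) - x·d(w)`. -/
lemma dMon_cons {m : ℕ} (x : ℤ × S) (w : Fin (m+1) → ℤ × S) :
    dMon (shiftOp S) (Fin.cons x w)
      = mon w - mon (sh S ∘ w) - consHom x m (dMon (shiftOp S) w) := by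
  rw [dMon, Fin.sum_univ_succ]
  rw [del_cons_zero, act_cons_zero]
  have h3 : ∑ i : Fin m, ((-1 : ℤ) ^ ((i.succ : Fin (m+1)) : ℕ)) •
      (mon (del (Fin.cons x w) i.succ) - mon (act (shiftOp S) (Fin.cons x w) i.succ))
      = -(consHom x m (dMon (shiftOp S) w)) := by
    rw [dMon, map_sum, ← Finset.sum_neg_distrib]
    refine Finset.sum_congr rfl fun i _ => ?_
    rw [del_cons_succ, act_cons_succ, Fin.val_succ, pow_succ, mul_comm, mul_smul, neg_one_smul]
    rw [map_zsmul, map_sub, consHom_mon, consHom_mon]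
  rw [h3, Fin.val_zero, pow_zero, one_smul]
  abel

lemma zsmul_mon {X : Type} {m : ℕ} (z : ℤ) (w : Fin m → X) :
    z • mon w = Finsupp.single w z := by
  rw [mon, Finsupp.smul_single, smul_eq_mul, mul_one]

/-- Chain-level recursion: `d(x·c) = c - T c - x·(d c)`. -/
lemma d_consHom (m : ℕ) (x : ℤ × S) (c : CR (ℤ × S) (m+1)) :
    d (shiftOp S) (m+1) (consHom x (m+1) c)
      = c - mapChains (sh S) (m+1) c - consHom x m (d (shiftOp S) m c) := by
  induction c using Finsupp.induction_linear with
  | zero => simp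
  | add f g hf hg =>
    simp only [map_add, hf, hg]; abel
  | single w z =>
    simp only [consHom_single, map_zsmul, d_mon, mapChains_single, d_single, consHom_mon]
    rw [dMon_cons]
    rw [smul_sub, smul_sub, zsmul_mon]

/-- Equivariance of the differential under the diagonal shift. -/
lemma d_mapChains (m : ℕ) (c : CR (ℤ × S) (m+1)) :
    d (shiftOp S) m (mapChains (sh S) (m+1) c)
      = mapChains (sh S) m (d (shiftOp S) m c) := by
  induction c using Finsupp.induction_linear with
  | zero => simp
  | add f g hf hg => simp only [map_add, hf, hg]
  | single w z =>
    simp only [mapChains_single, map_zsmul, d_single, d_mon]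
    congr 1
    unfold dMon
    simp only [map_sum, map_zsmul, map_sub, mapChains_mon]
    refine Finset.sum_congr rfl fun i _ => ?_
    have h1 : del (sh S ∘ w) i = sh S ∘ del w i := by
      funext j; simp only [del, Function.comp]; split <;> rfl
    have h2 : act (shiftOp S) (sh S ∘ w) i = sh S ∘ act (shiftOp S) w i := by
      funext j; simp only [act, Function.comp]; split <;> rfl
    rw [h1, h2]

lemma mapChains_consHom (m : ℕ) (φ : ℤ × S → ℤ × S) (x : ℤ × S) (c : CR (ℤ × S) m) :
    mapChains φ (m+1) (consHom x m c) = consHom (φ x) m (mapChains φ m c) := by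
  induction c using Finsupp.induction_linear with
  | zero => simp
  | add f g hf hg => simp only [map_add, hf, hg]
  | single w z =>
    simp only [consHom_single, map_zsmul, mapChains_single, consHom_mon, mapChains_mon]
    have h : φ ∘ Fin.cons x w = Fin.cons (φ x) (φ ∘ w) := by
      funext j; induction j using Fin.cases <;> simp
    rw [h]

lemma mapChains_mapChains (m : ℕ) (φ ψ : ℤ × S → ℤ × S) (c : CR (ℤ × S) m) :
    mapChains φ m (mapChains ψ m c) = mapChains (φ ∘ ψ) m c := by
  induction c using Finsupp.induction_linear with
  | zero => simp
  | add f g hf hg => simp only [map_add, hf, hg]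
  | single w z => simp [Function.comp_assoc]

@[simp] lemma mapChains_sh_shInv (m : ℕ) (c : CR (ℤ × S) m) :
    mapChains (sh S) m (mapChains (shInv S) m c) = c := by
  rw [mapChains_mapChains]
  induction c using Finsupp.induction_linear with
  | zero => simp
  | add f g hf hg => simp only [map_add, hf, hg]
  | single w z =>
    simp only [mapChains_single]
    have : (sh S ∘ shInv S) ∘ w = w := by funext j; simp [Function.comp]
    rw [this, zsmul_mon]

/-- `d ∘ d = 0`. -/
lemma d_d (m : ℕ) (c : CR (ℤ × S) (m+2)) :
    d (shiftOp S) m (d (shiftOp S) (m+1) c) = 0 := by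
  induction m with
  | zero =>
    have h0 : ∀ c' : CR (ℤ × S) 1, d (shiftOp S) 0 c' = 0 := by
      intro c'
      induction c' using Finsupp.induction_linear with
      | zero => simp
      | add f g hf hg => simp [hf, hg]
      | single w z => simp [dMon]
    exact h0 _
  | succ m ih =>
    induction c using Finsupp.induction_linear with
    | zero => simp
    | add f g hf hg => simp [hf, hg]
    | single w z =>
      rw [← zsmul_mon]
      rw [map_zsmul, map_zsmul, smul_eq_zero]
      right
      rw [← Fin.cons_self_tail w, ← consHom_mon, d_consHom]
      rw [map_sub, map_sub, d_consHom, d_mapChains]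
      rw [ih _]
      rw [map_zero]
      abel


variable {n : ℕ}

/-- Upward telescope: `d(φb·b·u) = b·u - φb·u + φb·b·du`. -/
lemma tele_up (k : ℤ) (s : S) (u : CR (ℤ × S) (n+1)) :
    d (shiftOp S) (n+2) (consHom (k+1, s) (n+2) (consHom (k, s) (n+1) u))
      = consHom (k, s) (n+1) u - consHom (k+1, s) (n+1) u
        + consHom (k+1, s) (n+1) (consHom (k, s) n (d (shiftOp S) n u)) := by
  rw [d_consHom, d_consHom, mapChains_consHom]
  rw [show sh S (k, s) = (k+1, s) from rfl]
  rw [map_sub, map_sub]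
  abel

/-- Downward telescope: `d(b·b·u) = b·Tu - φb·Tu - b·b·du`. -/
lemma tele_down (k : ℤ) (s : S) (u : CR (ℤ × S) (n+1)) :
    d (shiftOp S) (n+2) (consHom (k, s) (n+2) (consHom (k, s) (n+1) u))
      = consHom (k, s) (n+1) (mapChains (sh S) (n+1) u)
        - consHom (k+1, s) (n+1) (mapChains (sh S) (n+1) u)
        + consHom (k, s) (n+1) (consHom (k, s) n (d (shiftOp S) n u)) := by
  rw [d_consHom, d_consHom, mapChains_consHom]
  rw [show sh S (k, s) = (k+1, s) from rfl]
  rw [map_sub, map_sub]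
  abel

/-- `consHom` as `mapDomain`. -/
lemma consHom_eq_mapDomain (x : ℤ × S) (m : ℕ) (c : CR (ℤ × S) m) :
    consHom x m c = Finsupp.mapDomain (Fin.cons x) c := by
  induction c using Finsupp.induction_linear with
  | zero => simp
  | add f g hf hg => simp only [map_add, hf, hg, Finsupp.mapDomain_add]
  | single w z => simp [Finsupp.mapDomain_single, zsmul_mon]

/-- `mapChains` as `mapDomain`. -/
lemma mapChains_eq_mapDomain (φ : ℤ × S → ℤ × S) (m : ℕ) (c : CR (ℤ × S) m) :
    mapChains φ m c = Finsupp.mapDomain (fun w => φ ∘ w) c := by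
  induction c using Finsupp.induction_linear with
  | zero => simp
  | add f g hf hg => simp only [map_add, hf, hg, Finsupp.mapDomain_add]
  | single w z => simp [Finsupp.mapDomain_single, zsmul_mon]

open Finsupp in
/-- `consHom x` lands in chains whose head is `x`. -/
lemma consHom_mem_supported (P : (ℤ × S) → Prop) (x : ℤ × S) (hx : P x) (m : ℕ)
    (c : CR (ℤ × S) m) :
    consHom x m c ∈ Finsupp.supported ℤ ℤ {w : Fin (m+1) → ℤ × S | P (w 0)} := by
  classical
  rw [Finsupp.mem_supported, consHom_eq_mapDomain]
  intro w hw
  simp only [Finset.mem_coe] at hw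
  have := Finsupp.mapDomain_support hw
  simp only [Finset.mem_image] at this
  obtain ⟨v, -, rfl⟩ := this
  simpa using hx


/-- The head-erasing map. -/
noncomputable def theta {S : Type} (m : ℕ) : CR (ℤ × S) (m+1) →+ CR (ℤ × S) m :=
  Finsupp.liftAddHom fun w => zmultiplesHom _ (mon (Fin.tail w))

/-- The correction term in the head recursion for `d`. -/
noncomputable def psi (S : Type) (m : ℕ) : CR (ℤ × S) (m+2) →+ CR (ℤ × S) (m+1) :=
  Finsupp.liftAddHom fun w => zmultiplesHom _ (consHom (w 0) m (dMon (shiftOp S) (Fin.tail w)))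

@[simp] lemma theta_single (m : ℕ) (w : Fin (m+1) → ℤ × S) (z : ℤ) :
    theta m (Finsupp.single w z) = z • mon (Fin.tail w) := by
  simp [theta]

@[simp] lemma psi_single (m : ℕ) (w : Fin (m+2) → ℤ × S) (z : ℤ) :
    psi S m (Finsupp.single w z) = z • consHom (w 0) m (dMon (shiftOp S) (Fin.tail w)) := by
  simp [psi]

lemma theta_consHom (m : ℕ) (x : ℤ × S) (c : CR (ℤ × S) m) :
    theta m (consHom x m c) = c := by
  induction c using Finsupp.induction_linear with
  | zero => simp
  | add f g hf hg => simp [hf, hg]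
  | single w z => simp [Fin.tail_cons, zsmul_mon]

/-- The head recursion for `d`, globally. -/
lemma d_eq_theta (m : ℕ) (c : CR (ℤ × S) (m+2)) :
    d (shiftOp S) (m+1) c
      = theta (m+1) c - mapChains (sh S) (m+1) (theta (m+1) c) - psi S m c := by
  induction c using Finsupp.induction_linear with
  | zero => simp
  | add f g hf hg => simp only [map_add, hf, hg]; abel
  | single w z =>
    simp only [d_single, theta_single, psi_single, map_zsmul]
    rw [← smul_sub, ← smul_sub]
    congr 1
    conv_lhs => rw [← Fin.cons_self_tail w, dMon_cons]
    rw [mapChains_mon]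

/-- `psi` preserves head constraints. -/
lemma psi_supported (m : ℕ) (P : (ℤ × S) → Prop) (c : CR (ℤ × S) (m+2))
    (hc : c ∈ Finsupp.supported ℤ ℤ {w : Fin (m+2) → ℤ × S | P (w 0)}) :
    psi S m c ∈ Finsupp.supported ℤ ℤ {w : Fin (m+1) → ℤ × S | P (w 0)} := by
  rw [Finsupp.supported_eq_span_single] at hc
  induction hc using Submodule.span_induction with
  | mem x hx =>
    obtain ⟨w, hw, rfl⟩ := hx
    rw [psi_single, one_smul]
    exact consHom_mem_supported P (w 0) hw m _
  | zero => simp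
  | add x y hx hy ihx ihy => rw [map_add]; exact add_mem ihx ihy
  | smul a x hx ih => rw [map_zsmul]; exact Submodule.smul_mem _ a ih

/-- If `V - T V` is concentrated in head level `0`, then `V = 0`. -/
lemma V_eq_zero (m : ℕ) (V : CR (ℤ × S) (m+1))
    (h : V - mapChains (sh S) (m+1) V
        ∈ Finsupp.supported ℤ ℤ {w : Fin (m+1) → ℤ × S | (w 0).1 = 0}) :
    V = 0 := by
  classical
  have hinj : Function.Injective (fun u : Fin (m+1) → ℤ × S => sh S ∘ u) := by
    intro u v huv
    funext j
    have := congrFun huv j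
    simp only [Function.comp] at this
    have := congrArg (shInv S) this
    simpa using this
  have hTV : ∀ w : Fin (m+1) → ℤ × S,
      mapChains (sh S) (m+1) V w = V (shInv S ∘ w) := by
    intro w
    rw [mapChains_eq_mapDomain]
    have hw : (fun u : Fin (m+1) → ℤ × S => sh S ∘ u) (shInv S ∘ w) = w := by
      funext j; simp [Function.comp]
    conv_lhs => rw [← hw]
    rw [Finsupp.mapDomain_apply hinj]
  have key : ∀ w : Fin (m+1) → ℤ × S, (w 0).1 ≠ 0 → V w = V (shInv S ∘ w) := by
    intro w hw
    rw [Finsupp.mem_supported] at h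
    have hns : w ∉ (V - mapChains (sh S) (m+1) V).support := by
      intro hmem
      exact hw (h hmem)
    rw [Finsupp.notMem_support_iff, Finsupp.sub_apply, sub_eq_zero, hTV] at hns
    exact hns
  by_contra hV
  obtain ⟨w0, hw0⟩ := Finsupp.support_nonempty_iff.2 hV
  have hw0' : V w0 ≠ 0 := Finsupp.mem_support_iff.1 hw0
  have hsh_fst : ∀ (j : ℕ) (p : ℤ × S), ((sh S)^[j] p).1 = p.1 + j := by
    intro j
    induction j with
    | zero => simp
    | succ j ih =>
      intro p
      rw [Function.iterate_succ_apply']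
      have := ih p
      simp [sh, this]
      ring
  have hshInv_fst : ∀ (j : ℕ) (p : ℤ × S), ((shInv S)^[j] p).1 = p.1 - j := by
    intro j
    induction j with
    | zero => simp
    | succ j ih =>
      intro p
      rw [Function.iterate_succ_apply']
      have := ih p
      simp [shInv, this]
      ring
  rcases le_or_gt 0 ((w0 0).1) with hk | hk
  · -- nonnegative head level: push up forever
    set f : ℕ → (Fin (m+1) → ℤ × S) := fun j => (sh S)^[j] ∘ w0 with hf
    have hval : ∀ j, V (f j) = V w0 := by
      intro j
      induction j with
      | zero => simp [hf]
      | succ j ih =>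
        have h1 : (f (j+1) 0).1 ≠ 0 := by
          show (((sh S)^[j+1]) (w0 0)).1 ≠ 0
          rw [hsh_fst]
          omega
        have h2 : shInv S ∘ f (j+1) = f j := by
          funext t
          show shInv S ((sh S)^[j+1] (w0 t)) = (sh S)^[j] (w0 t)
          rw [Function.iterate_succ_apply', shInv_sh]
        rw [← ih, ← h2]
        exact key _ h1
    have hfinj : Function.Injective f := by
      intro a b hab
      have h0 : (((sh S)^[a]) (w0 0)).1 = (((sh S)^[b]) (w0 0)).1 := by
        rw [show (sh S)^[a] (w0 0) = f a 0 from rfl, show (sh S)^[b] (w0 0) = f b 0 from rfl,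
          hab]
      rw [hsh_fst, hsh_fst] at h0
      omega
    have : (↑V.support : Set (Fin (m+1) → ℤ × S)).Infinite :=
      Set.infinite_of_injective_forall_mem hfinj
        (fun j => Finsupp.mem_support_iff.2 (by rw [hval j]; exact hw0'))
    exact this (V.support.finite_toSet)
  · -- negative head level: push down forever
    set f : ℕ → (Fin (m+1) → ℤ × S) := fun j => (shInv S)^[j] ∘ w0 with hf
    have hval : ∀ j, V (f j) = V w0 := by
      intro j
      induction j with
      | zero => simp [hf]
      | succ j ih =>
        have h1 : (f j 0).1 ≠ 0 := by
          show (((shInv S)^[j]) (w0 0)).1 ≠ 0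
          rw [hshInv_fst]
          omega
        have h2 : shInv S ∘ f j = f (j+1) := by
          funext t
          show shInv S ((shInv S)^[j] (w0 t)) = (shInv S)^[j+1] (w0 t)
          rw [Function.iterate_succ_apply']
        rw [← ih, ← h2]
        exact (key _ h1).symm
    have hfinj : Function.Injective f := by
      intro a b hab
      have h0 : (((shInv S)^[a]) (w0 0)).1 = (((shInv S)^[b]) (w0 0)).1 := by
        rw [show (shInv S)^[a] (w0 0) = f a 0 from rfl, show (shInv S)^[b] (w0 0) = f b 0 from rfl,
          hab]
      rw [hshInv_fst, hshInv_fst] at h0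
      omega
    have : (↑V.support : Set (Fin (m+1) → ℤ × S)).Infinite :=
      Set.infinite_of_injective_forall_mem hfinj
        (fun j => Finsupp.mem_support_iff.2 (by rw [hval j]; exact hw0'))
    exact this (V.support.finite_toSet)


/-- One step of head-level reduction modulo boundaries. -/
lemma level_step (N : ℕ) :
    (Finsupp.supported ℤ ℤ {w : Fin (n+2) → ℤ × S | (w 0).1.natAbs ≤ N + 1} :
        Submodule ℤ (CR (ℤ × S) (n+2)))
      ≤ (Finsupp.supported ℤ ℤ {w : Fin (n+2) → ℤ × S | (w 0).1.natAbs ≤ N})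
        ⊔ (BC (shiftOp S) (n+2)).toIntSubmodule := by
  rw [Finsupp.supported_eq_span_single]
  rw [Submodule.span_le]
  rintro z ⟨w, hw, rfl⟩
  simp only [Set.mem_setOf_eq] at hw
  change (Finsupp.single w 1 : CR (ℤ × S) (n+2)) ∈ _
  by_cases h : (w 0).1.natAbs ≤ N
  · apply Submodule.mem_sup_left
    rw [Finsupp.mem_supported]
    intro v hv
    rcases Finset.mem_singleton.1 (Finsupp.support_single_subset hv) with rfl
    exact h
  · -- |level| = N + 1
    have hmon : (Finsupp.single w 1 : CR (ℤ × S) (n+2))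
        = consHom (w 0) (n+1) (mon (Fin.tail w)) := by
      rw [consHom_mon, Fin.cons_self_tail, mon]
    set k : ℤ := (w 0).1 with hkdef
    set s : S := (w 0).2 with hsdef
    have hw0 : w 0 = (k, s) := rfl
    rcases le_or_gt 0 k with hk | hk
    · -- k = N + 1 > 0 : go down using `tele_down` at level k - 1
      have hd := tele_down (S := S) (n := n) (k - 1) s
        (mapChains (shInv S) (n+1) (mon (Fin.tail w)))
      rw [mapChains_sh_shInv, show (k - 1 + 1 : ℤ) = k from by ring] at hd
      -- hd : d (...) = consHom (k-1,s) (mon tl) - consHom (k,s) (mon tl) + corr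
      have hsplit : (Finsupp.single w 1 : CR (ℤ × S) (n+2))
          = (consHom (k - 1, s) (n+1) (mon (Fin.tail w))
              + consHom (k - 1, s) (n+1) (consHom (k - 1, s) n
                  (d (shiftOp S) n (mapChains (shInv S) (n+1) (mon (Fin.tail w))))))
            - d (shiftOp S) (n+2) (consHom (k - 1, s) (n+2)
                (consHom (k - 1, s) (n+1) (mapChains (shInv S) (n+1) (mon (Fin.tail w))))) := by
        rw [hmon, hw0, hd]
        abel
      rw [hsplit]
      have hNk : (k - 1).natAbs ≤ N := by omega
      apply sub_mem
      · apply Submodule.mem_sup_left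
        exact add_mem
          (consHom_mem_supported (fun p => p.1.natAbs ≤ N) _ hNk _ _)
          (consHom_mem_supported (fun p => p.1.natAbs ≤ N) _ hNk _ _)
      · apply Submodule.mem_sup_right
        exact ⟨_, rfl⟩
    · -- k = -(N+1) < 0 : go up using `tele_up` at level k
      have hd := tele_up (S := S) (n := n) k s (mon (Fin.tail w))
      have hsplit : (Finsupp.single w 1 : CR (ℤ × S) (n+2))
          = (consHom (k + 1, s) (n+1) (mon (Fin.tail w))
              - consHom (k + 1, s) (n+1) (consHom (k, s) n
                  (d (shiftOp S) n (mon (Fin.tail w)))))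
            + d (shiftOp S) (n+2) (consHom (k + 1, s) (n+2)
                (consHom (k, s) (n+1) (mon (Fin.tail w)))) := by
        rw [hmon, hw0, hd]
        abel
      rw [hsplit]
      have hNk : (k + 1).natAbs ≤ N := by omega
      apply add_mem
      · apply Submodule.mem_sup_left
        exact sub_mem
          (consHom_mem_supported (fun p => p.1.natAbs ≤ N) _ hNk _ _)
          (consHom_mem_supported (fun p => p.1.natAbs ≤ N) _ hNk _ _)
      · apply Submodule.mem_sup_right
        exact ⟨_, rfl⟩

/-- Full head-level reduction modulo boundaries. -/
lemma level_reduction (N : ℕ) :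
    (Finsupp.supported ℤ ℤ {w : Fin (n+2) → ℤ × S | (w 0).1.natAbs ≤ N} :
        Submodule ℤ (CR (ℤ × S) (n+2)))
      ≤ (Finsupp.supported ℤ ℤ {w : Fin (n+2) → ℤ × S | (w 0).1.natAbs ≤ 0})
        ⊔ (BC (shiftOp S) (n+2)).toIntSubmodule := by
  induction N with
  | zero => exact le_sup_left
  | succ N ih => exact (level_step N).trans (sup_le ih le_sup_right)


/-- A head-level-0 chain is, modulo `consHom (0,t0)` of its head erasure, in the
closure of the difference set. -/
lemma in_closure (t0 : S) (c : CR (ℤ × S) (n+2))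
    (hc : c ∈ Finsupp.supported ℤ ℤ {w : Fin (n+2) → ℤ × S | (w 0).1.natAbs ≤ 0}) :
    c - consHom ((0:ℤ), t0) (n+1) (theta (n+1) c)
      ∈ (AddSubgroup.closure {z : CR (ℤ × S) (n+2) |
          ∃ (s t : S) (u : CR (ℤ × S) (n+1)),
            z = consHom ((0:ℤ), s) (n+1) u - consHom ((0:ℤ), t) (n+1) u}).toIntSubmodule := by
  rw [Finsupp.supported_eq_span_single] at hc
  induction hc using Submodule.span_induction with
  | mem x hx =>
    obtain ⟨w, hw, rfl⟩ := hx
    simp only [Set.mem_setOf_eq] at hw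
    have hw1 : (w 0).1 = 0 := by omega
    have hw0 : w 0 = ((0:ℤ), (w 0).2) := by
      rw [← hw1]
    have hmon : (Finsupp.single w 1 : CR (ℤ × S) (n+2))
        = consHom (w 0) (n+1) (mon (Fin.tail w)) := by
      rw [consHom_mon, Fin.cons_self_tail, mon]
    beta_reduce
    rw [hmon, theta_consHom, hw0]
    apply AddSubgroup.subset_closure
    exact ⟨(w 0).2, t0, mon (Fin.tail w), rfl⟩
  | zero => simp
  | add x y hx hy ihx ihy =>
    have : x + y - consHom ((0:ℤ), t0) (n+1) (theta (n+1) (x + y))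
        = (x - consHom ((0:ℤ), t0) (n+1) (theta (n+1) x))
          + (y - consHom ((0:ℤ), t0) (n+1) (theta (n+1) y)) := by
      rw [map_add, map_add]
      abel
    rw [this]
    exact add_mem ihx ihy
  | smul a x hx ih =>
    have : a • x - consHom ((0:ℤ), t0) (n+1) (theta (n+1) (a • x))
        = a • (x - consHom ((0:ℤ), t0) (n+1) (theta (n+1) x)) := by
      rw [map_zsmul, map_zsmul, smul_sub]
    rw [this]
    exact Submodule.smul_mem _ a ih

end FPR

/-- On the free permutation rack `(ℤ × S, +1)`, every cycle of degree `≥ 2` is, modulo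
boundaries, in the subgroup generated by elements `(s−t)·u` with `s, t ∈ {0} × S`. -/
theorem cycles_start_augmentation_zero (S : Type) (n : ℕ) (c : CR (ℤ × S) (n+2))
    (hc : c ∈ ZC (shiftOp S) (n+2)) :
    ∃ c' : CR (ℤ × S) (n+2), c - c' ∈ BC (shiftOp S) (n+2) ∧
      c' ∈ AddSubgroup.closure {z : CR (ℤ × S) (n+2) |
        ∃ (s t : S) (u : CR (ℤ × S) (n+1)),
          z = consHom ((0:ℤ), s) (n+1) u - consHom ((0:ℤ), t) (n+1) u} := by
  classical
  open FPR in
  -- `c` lies in some bounded head-level part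
  have hcN : c ∈ Finsupp.supported ℤ ℤ
      {w : Fin (n+2) → ℤ × S |
        (w 0).1.natAbs ≤ c.support.sup (fun w => (w 0).1.natAbs)} := by
    rw [Finsupp.mem_supported]
    intro w hw
    show (w 0).1.natAbs ≤ _
    exact Finset.le_sup (f := fun w => (w 0).1.natAbs) hw
  have hred := FPR.level_reduction (S := S) (n := n)
    (c.support.sup (fun w => (w 0).1.natAbs)) hcN
  rw [Submodule.mem_sup] at hred
  obtain ⟨c₀, hc₀, b', hb', hsum⟩ := hred
  obtain ⟨b, hb⟩ := hb'
  -- `c₀` is again a cycle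
  have hdc : d (shiftOp S) (n+1) c = 0 := hc
  have hc₀eq : c₀ = c - b' := by rw [← hsum]; abel
  have hdc₀ : d (shiftOp S) (n+1) c₀ = 0 := by
    rw [hc₀eq, map_sub, hdc, ← hb, FPR.d_d, sub_zero]
  -- the head erasure of `c₀` vanishes
  have hrel := FPR.d_eq_theta (S := S) n c₀
  rw [hdc₀, eq_comm, sub_eq_zero] at hrel
  have hc₀W : c₀ ∈ Finsupp.supported ℤ ℤ
      {w : Fin (n+2) → ℤ × S | (w 0).1 = 0} := by
    have hset : {w : Fin (n+2) → ℤ × S | (w 0).1.natAbs ≤ 0}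
        = {w : Fin (n+2) → ℤ × S | (w 0).1 = 0} := by
      ext w; simp only [Set.mem_setOf_eq]; omega
    rw [← hset]
    exact hc₀
  have hW : FPR.psi S n c₀ ∈ Finsupp.supported ℤ ℤ
      {w : Fin (n+1) → ℤ × S | (w 0).1 = 0} :=
    FPR.psi_supported n (fun p => p.1 = 0) c₀ hc₀W
  have hV0 : FPR.theta (n+1) c₀ = 0 := by
    apply FPR.V_eq_zero (m := n) (V := FPR.theta (n+1) c₀)
    rw [← hrel] at hW
    exact hW
  refine ⟨c₀, ?_, ?_⟩
  · rw [hc₀eq, sub_sub_cancel, ← hb]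
    exact ⟨b, rfl⟩
  · by_cases hc₀0 : c₀ = 0
    · rw [hc₀0]
      exact AddSubgroup.zero_mem _
    · obtain ⟨w1, -⟩ := Finsupp.support_nonempty_iff.2 hc₀0
      have := FPR.in_closure (w1 0).2 c₀ hc₀
      rw [hV0, map_zero, sub_zero] at this
      exact this
end

section
/- For the free permutation rack (ℤ × S, +1) on a set S, the multiplication map ⟨S̄⟩^{⊗(n−1)} ⊗ ℤS → HR_n(ℤ × S, +1), sending v₁ ⊗ ⋯ ⊗ v_{n−1} ⊗ s to the homology class of the cycle v₁⋯v_{n−1}·s, is an isomorphism of abelian groups for all n ≥ 1. -/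
set_option maxHeartbeats 1000000
set_option synthInstance.maxHeartbeats 400000

open TensorProduct

/-- The augmentation `ℤS → ℤ`. -/
noncomputable def aug (S : Type) : (S →₀ ℤ) →ₗ[ℤ] ℤ :=
  Finsupp.linearCombination ℤ (fun _ : S => (1 : ℤ))

/-- Augmentation-zero elements `S̄ ⊆ ℤS`. -/
noncomputable def Saug (S : Type) : Submodule ℤ (S →₀ ℤ) := LinearMap.ker (aug S)

/-- An element of `ℤS` viewed as a degree-one chain on `ℤ × S`, via `s ↦ (0, s)`. -/
noncomputable def emb1 {S : Type} (c : S →₀ ℤ) : CR (ℤ × S) 1 :=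
  c.mapDomain fun s => (fun _ : Fin 1 => ((0 : ℤ), s))

/-- The product chain `v₁⋯v_n·c` in `CR_{n+1}(ℤ × S)`, all factors via `s ↦ (0, s)`. -/
noncomputable def prodChain {S : Type} : (n : ℕ) → (Fin n → (S →₀ ℤ)) → (S →₀ ℤ) →
    CR (ℤ × S) (n+1)
  | 0, _, c => emb1 c
  | (m+1), v, c =>
      mulChain ((v 0).mapDomain fun s => ((0 : ℤ), s)) (m+1)
        (prodChain m (fun i => v i.succ) c)

namespace FRH

variable {S : Type}

/-- the shift permutation -/
def sh (x : ℤ × S) : ℤ × S := (x.1 + 1, x.2)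

/-- shift by an integer -/
def shL (j : ℤ) (x : ℤ × S) : ℤ × S := (x.1 + j, x.2)

lemma shL_zero : (shL 0 : ℤ × S → ℤ × S) = id := by
  funext x; simp [shL]

lemma shL_shL (j j' : ℤ) (x : ℤ × S) : shL j (shL j' x) = shL (j + j') x := by
  simp [shL]; ring

lemma sh_eq_shL : (sh : ℤ × S → ℤ × S) = shL 1 := rfl

@[simp] lemma shL_snd (j : ℤ) (x : ℤ × S) : (shL j x).2 = x.2 := rfl

@[simp] lemma shL_fst (j : ℤ) (x : ℤ × S) : (shL j x).1 = x.1 + j := rfl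

/-- T: diagonal shift on chains -/
noncomputable abbrev T (n : ℕ) : CR (ℤ × S) n →+ CR (ℤ × S) n := mapChains sh n

@[simp] lemma mapChains_mon (φ : ℤ × S → ℤ × S) (n : ℕ) (w : Fin n → ℤ × S) :
    mapChains φ n (mon w) = mon (φ ∘ w) := by
  simp [mapChains, mon]

@[simp] lemma d_mon {X : Type} (op : X → X → X) (n : ℕ) (w : Fin (n+1) → X) :
    d op n (mon w) = dMon op w := by
  simp [d, mon]

@[simp] lemma consHom_mon {X : Type} (x : X) (n : ℕ) (w : Fin n → X) :
    consHom x n (mon w) = mon (Fin.cons x w) := by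
  simp [consHom, mon]

lemma d_zero_apply (c : CR (ℤ × S) 1) : d (shiftOp S) 0 c = 0 := by
  have : d (shiftOp S) 0 = (0 : CR (ℤ × S) 1 →+ CR (ℤ × S) 0) := by
    apply Finsupp.addHom_ext
    intro w y
    simp [d, dMon]
  rw [this]; rfl

lemma del_cons {X : Type} (x : X) {n : ℕ} (w : Fin (n+1) → X) (i : Fin n) :
    del (Fin.cons x w) i.succ = Fin.cons x (del w i) := by
  funext j
  refine Fin.cases ?_ (fun j' => ?_) j
  · simp [del]
  · simp only [del, Fin.cons_succ]
    by_cases h : (j' : ℕ) < (i : ℕ)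
    · have h' : ((j'.succ : Fin (n+1)) : ℕ) < ((i.succ : Fin (n+1)) : ℕ) := by
        simpa using Nat.succ_lt_succ h
      rw [if_pos h', if_pos h]
      have : (j'.succ).castSucc = (j'.castSucc).succ := by
        exact Fin.ext rfl
      rw [this, Fin.cons_succ]
    · have h' : ¬ ((j'.succ : Fin (n+1)) : ℕ) < ((i.succ : Fin (n+1)) : ℕ) := by
        simpa using h
      rw [if_neg h', if_neg h]

lemma act_cons (x : ℤ × S) {n : ℕ} (w : Fin (n+1) → ℤ × S) (i : Fin n) :
    act (shiftOp S) (Fin.cons x w) i.succ = Fin.cons x (act (shiftOp S) w i) := by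
  funext j
  refine Fin.cases ?_ (fun j' => ?_) j
  · simp [act]
  · simp only [act, Fin.cons_succ]
    by_cases h : (j' : ℕ) < (i : ℕ)
    · have h' : ((j'.succ : Fin (n+1)) : ℕ) < ((i.succ : Fin (n+1)) : ℕ) := by
        simpa using Nat.succ_lt_succ h
      rw [if_pos h', if_pos h]
      have : (j'.succ).castSucc = (j'.castSucc).succ := by
        exact Fin.ext rfl
      rw [this, Fin.cons_succ]
    · have h' : ¬ ((j'.succ : Fin (n+1)) : ℕ) < ((i.succ : Fin (n+1)) : ℕ) := by
        simpa using h
      rw [if_neg h', if_neg h]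
      simp [shiftOp, ← Fin.succ_castSucc]

lemma del_cons_zero {X : Type} (x : X) {n : ℕ} (w : Fin (n+1) → X) :
    del (Fin.cons x w) 0 = w := by
  funext j; simp [del]

lemma act_cons_zero (x : ℤ × S) {n : ℕ} (w : Fin (n+1) → ℤ × S) :
    act (shiftOp S) (Fin.cons x w) 0 = sh ∘ w := by
  funext j; simp [act, shiftOp, sh, Function.comp]

/-- The key cons-splitting of the differential. -/
lemma dMon_cons (x : ℤ × S) {n : ℕ} (w : Fin (n+1) → ℤ × S) :
    dMon (shiftOp S) (Fin.cons x w) =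
      mon w - mon (sh ∘ w) - consHom x n (dMon (shiftOp S) w) := by
  rw [dMon, Fin.sum_univ_succ]
  have h0 : ((-1 : ℤ) ^ ((0 : Fin (n+1)) : ℕ)) •
      (mon (del (Fin.cons x w) 0) - mon (act (shiftOp S) (Fin.cons x w) 0)) =
      mon w - mon (sh ∘ w) := by
    rw [del_cons_zero, act_cons_zero]; simp
  rw [h0]
  have h1 : ∀ i : Fin n, ((-1 : ℤ) ^ ((i.succ : Fin (n+1)) : ℕ)) •
      (mon (del (Fin.cons x w) i.succ) - mon (act (shiftOp S) (Fin.cons x w) i.succ)) =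
      -(((-1 : ℤ) ^ (i : ℕ)) • (mon (Fin.cons x (del w i)) - mon (Fin.cons x (act (shiftOp S) w i)))) := by
    intro i
    rw [del_cons, act_cons]
    have : ((i.succ : Fin (n+1)) : ℕ) = (i : ℕ) + 1 := rfl
    rw [this, pow_succ]
    rw [mul_comm _ (-1 : ℤ), neg_one_mul, neg_zsmul]
  simp only [h1]
  rw [Finset.sum_neg_distrib]
  have h2 : consHom x n (dMon (shiftOp S) w) =
      ∑ i : Fin n, ((-1 : ℤ) ^ (i : ℕ)) • (mon (Fin.cons x (del w i)) - mon (Fin.cons x (act (shiftOp S) w i))) := by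
    rw [dMon, map_sum]
    refine Finset.sum_congr rfl (fun i _ => ?_)
    rw [map_zsmul, map_sub, consHom_mon, consHom_mon]
  rw [h2]
  abel


/-! ### extensionality on monomials -/

lemma hom_ext_mon {X : Type} {n : ℕ} {M : Type} [AddCommGroup M] {f g : CR X n →+ M}
    (h : ∀ w, f (mon w) = g (mon w)) : f = g := by
  apply Finsupp.addHom_ext
  intro w y
  have hy : (Finsupp.single w y : CR X n) = y • (mon w) := by
    simp [mon, Finsupp.smul_single]
  rw [hy, map_zsmul, map_zsmul, h]

lemma hom_ext_mon' {X : Type} {n : ℕ} {M : Type} [AddCommGroup M] {f g : CR X n →+ M}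
    (h : ∀ w, f (mon w) = g (mon w)) : ∀ c, f c = g c := by
  rw [hom_ext_mon h]; intro c; rfl

/-! ### T and d commute -/

lemma del_sh {n : ℕ} (w : Fin (n+1) → ℤ × S) (i : Fin n) :
    del (sh ∘ w) i = sh ∘ (del w i) := by
  funext j; by_cases h : (j:ℕ) < (i:ℕ) <;> simp [del, h, Function.comp]

lemma act_sh {n : ℕ} (w : Fin (n+1) → ℤ × S) (i : Fin n) :
    act (shiftOp S) (sh ∘ w) i = sh ∘ (act (shiftOp S) w i) := by
  funext j; by_cases h : (j:ℕ) < (i:ℕ) <;> simp [act, h, Function.comp, shiftOp, sh]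

lemma dMon_sh {n : ℕ} (w : Fin (n+1) → ℤ × S) :
    dMon (shiftOp S) (sh ∘ w) = T n (dMon (shiftOp S) w) := by
  rw [dMon, dMon, map_sum]
  refine Finset.sum_congr rfl (fun i _ => ?_)
  rw [map_zsmul, map_sub, mapChains_mon, mapChains_mon, del_sh, act_sh]

lemma d_T (n : ℕ) (c : CR (ℤ × S) (n+1)) :
    d (shiftOp S) n (T (n+1) c) = T n (d (shiftOp S) n c) := by
  refine hom_ext_mon' (f := (d (shiftOp S) n).comp (T (n+1))) (g := (T n).comp (d (shiftOp S) n)) ?_ c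
  intro w
  simp only [AddMonoidHom.comp_apply, mapChains_mon, d_mon]
  exact dMon_sh w

/-! ### the fundamental cons identity -/

lemma d_consHom (x : ℤ × S) (n : ℕ) (c : CR (ℤ × S) (n+1)) :
    d (shiftOp S) (n+1) (consHom x (n+1) c) =
      c - T (n+1) c - consHom x n (d (shiftOp S) n c) := by
  have : (d (shiftOp S) (n+1)).comp (consHom x (n+1)) =
      (AddMonoidHom.id _) - (T (n+1)) - (consHom x n).comp (d (shiftOp S) n) := by
    apply hom_ext_mon
    intro w
    simp only [AddMonoidHom.comp_apply, consHom_mon, d_mon, AddMonoidHom.sub_apply,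
      AddMonoidHom.id_apply, mapChains_mon]
    exact dMon_cons x w
  have h2 := congrArg (fun f => f c) this
  simpa using h2

/-! ### mulChain -/

lemma mulChain_apply {X : Type} (v : X →₀ ℤ) (n : ℕ) (c : CR X n) :
    mulChain v n c = v.sum (fun x k => k • consHom x n c) := by
  rw [mulChain, Finsupp.sum]
  rw [AddMonoidHom.finset_sum_apply]
  refine Finset.sum_congr rfl (fun x _ => ?_)
  rfl

lemma mulChain_add {X : Type} (v v' : X →₀ ℤ) (n : ℕ) (c : CR X n) :
    mulChain (v + v') n c = mulChain v n c + mulChain v' n c := by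
  rw [mulChain_apply, mulChain_apply, mulChain_apply]
  exact Finsupp.sum_add_index' (by intro a; simp) (by intro a b₁ b₂; rw [add_zsmul])

lemma mulChain_single {X : Type} (x : X) (k : ℤ) (n : ℕ) (c : CR X n) :
    mulChain (Finsupp.single x k) n c = k • consHom x n c := by
  rw [mulChain_apply]
  exact Finsupp.sum_single_index (by simp)

lemma mulChain_neg {X : Type} (v : X →₀ ℤ) (n : ℕ) (c : CR X n) :
    mulChain (-v) n c = - mulChain v n c := by
  have := mulChain_add (-v) v n c
  simp only [neg_add_cancel] at this
  have h0 : mulChain (0 : X →₀ ℤ) n c = 0 := by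
    rw [mulChain_apply]; simp
  rw [h0] at this
  exact eq_neg_of_add_eq_zero_left this.symm

lemma mulChain_sub {X : Type} (v v' : X →₀ ℤ) (n : ℕ) (c : CR X n) :
    mulChain (v - v') n c = mulChain v n c - mulChain v' n c := by
  rw [sub_eq_add_neg, mulChain_add, mulChain_neg, sub_eq_add_neg]

/-- augmentation on `ℤ[ℤ×S]` -/
noncomputable def epsX : ((ℤ × S) →₀ ℤ) →+ ℤ :=
  Finsupp.liftAddHom fun _ => AddMonoidHom.id ℤ

@[simp] lemma epsX_single (x : ℤ × S) (k : ℤ) : epsX (Finsupp.single x k) = k := by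
  simp [epsX]

lemma d_mulChain (v : (ℤ × S) →₀ ℤ) (n : ℕ) (c : CR (ℤ × S) (n+1)) :
    d (shiftOp S) (n+1) (mulChain v (n+1) c) =
      epsX v • (c - T (n+1) c) - mulChain v n (d (shiftOp S) n c) := by
  induction v using Finsupp.induction with
  | zero =>
    have h0 : ∀ (m : ℕ) (c' : CR (ℤ×S) m), mulChain (0 : (ℤ×S) →₀ ℤ) m c' = 0 := by
      intro m c'; rw [mulChain_apply]; simp
    rw [h0, h0]; simp
  | single_add x k v hx hk ih =>
    rw [mulChain_add, mulChain_add, map_add, ih, mulChain_single, mulChain_single,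
      map_zsmul, d_consHom, map_add, epsX_single]
    module

/-! ### the telescope -/

variable (s0 : S)

/-- telescope chain: `sum_{j in [0,k)} x0 · T^j u` (with sign convention for negative k). -/
noncomputable def tele (k : ℤ) {m : ℕ} (u : Fin m → ℤ × S) : CR (ℤ × S) (m+1) :=
  if 0 ≤ k then ∑ j ∈ Finset.range k.toNat, mon (Fin.cons ((0:ℤ), s0) (shL (j : ℤ) ∘ u))
  else -∑ j ∈ Finset.range (-k).toNat, mon (Fin.cons ((0:ℤ), s0) (shL (k + (j : ℤ)) ∘ u))

@[simp] lemma tele_zero {m : ℕ} (u : Fin m → ℤ × S) : tele s0 0 u = 0 := by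
  simp [tele]

lemma tele_succ (k : ℤ) {m : ℕ} (u : Fin m → ℤ × S) :
    tele s0 (k+1) u = tele s0 k u + mon (Fin.cons ((0:ℤ), s0) (shL k ∘ u)) := by
  rcases le_or_gt 0 k with hk | hk
  · have hk1 : (0:ℤ) ≤ k + 1 := by omega
    have ht : (k+1).toNat = k.toNat + 1 := by omega
    rw [tele, tele, if_pos hk1, if_pos hk, ht, Finset.sum_range_succ,
      Int.toNat_of_nonneg hk]
  · rcases eq_or_lt_of_le (by omega : k + 1 ≤ 0) with hk1 | hk1
    · -- k = -1
      have hkm : k = -1 := by omega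
      subst hkm
      rw [tele, tele, if_pos (by omega : (0:ℤ) ≤ (-1:ℤ)+1), if_neg (by omega)]
      norm_num [Finset.sum_range_one]
    · have hneg : ¬ (0:ℤ) ≤ k + 1 := by omega
      have hneg' : ¬ (0:ℤ) ≤ k := by omega
      rw [tele, tele, if_neg hneg, if_neg hneg']
      have hN : (-k).toNat = (-(k+1)).toNat + 1 := by omega
      rw [hN, Finset.sum_range_succ']
      have h0 : mon (Fin.cons ((0:ℤ), s0) (shL (k + ((0:ℕ) : ℤ)) ∘ u)) =
          mon (Fin.cons ((0:ℤ), s0) (shL k ∘ u)) := by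
        norm_num
      rw [h0]
      have hsum : ∀ j : ℕ, mon (Fin.cons ((0:ℤ), s0) (shL (k + ((j+1 : ℕ) : ℤ)) ∘ u)) =
          mon (Fin.cons ((0:ℤ), s0) (shL ((k+1) + (j : ℤ)) ∘ u)) := by
        intro j
        congr 2
        push_cast
        ring
      simp only [hsum]
      abel

/-! ### nu chains -/

/-- `ν(x) = (0, s(x)) - (0, s₀)` as an element of `ℤ[ℤ×S]`. -/
noncomputable def nuc (x : ℤ × S) : (ℤ × S) →₀ ℤ :=
  Finsupp.single ((0:ℤ), x.2) 1 - Finsupp.single ((0:ℤ), s0) 1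

lemma mulChain_nuc (x : ℤ × S) (n : ℕ) (c : CR (ℤ × S) n) :
    mulChain (nuc s0 x) n c = consHom ((0:ℤ), x.2) n c - consHom ((0:ℤ), s0) n c := by
  rw [nuc, mulChain_sub, mulChain_single, mulChain_single, one_zsmul, one_zsmul]

@[simp] lemma epsX_nuc (x : ℤ × S) : epsX (nuc s0 x) = 0 := by
  rw [nuc, map_sub, epsX_single, epsX_single, sub_self]

@[simp] lemma nuc_sh (x : ℤ × S) : nuc s0 (sh x) = nuc s0 x := rfl

@[simp] lemma nuc_shL (j : ℤ) (x : ℤ × S) : nuc s0 (shL j x) = nuc s0 x := rfl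

/-! ### the homotopy H -/

/-- the contracting homotopy, defined by recursion on degree;
on a monomial it is the representative formula minus a telescope. -/
noncomputable def Hh : (m : ℕ) → (CR (ℤ × S) (m+1) →+ CR (ℤ × S) (m+2))
  | 0 => Finsupp.liftAddHom fun u => zmultiplesHom _
      (- tele s0 ((u 0).1) (fun _ : Fin 1 => ((0:ℤ), (u 0).2)))
  | (m+1) => Finsupp.liftAddHom fun u => zmultiplesHom _
      (- mulChain (nuc s0 (u 0)) (m+2)
          (Hh (m) (mon (fun i : Fin (m+1) => shL (-(u 0).1) (Fin.tail u i))))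
        - tele s0 ((u 0).1)
            (Fin.cons ((0:ℤ), (u 0).2) (fun i : Fin (m+1) => shL (-(u 0).1) (Fin.tail u i))))

lemma Hh_zero_mon (u : Fin 1 → ℤ × S) :
    Hh s0 0 (mon u) = - tele s0 ((u 0).1) (fun _ : Fin 1 => ((0:ℤ), (u 0).2)) := by
  rw [Hh, mon]
  simp

lemma Hh_succ_mon (m : ℕ) (u : Fin (m+2) → ℤ × S) :
    Hh s0 (m+1) (mon u) =
      - mulChain (nuc s0 (u 0)) (m+2)
          (Hh s0 m (mon (fun i : Fin (m+1) => shL (-(u 0).1) (Fin.tail u i))))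
      - tele s0 ((u 0).1)
          (Fin.cons ((0:ℤ), (u 0).2) (fun i : Fin (m+1) => shL (-(u 0).1) (Fin.tail u i))) := by
  conv_lhs => rw [Hh, mon]
  simp

lemma comp_cons {A B : Type} (f : A → B) (a : A) {m : ℕ} (b : Fin m → A) :
    f ∘ Fin.cons a b = Fin.cons (f a) (f ∘ b) := by
  funext j
  refine Fin.cases ?_ (fun j' => ?_) j <;> simp [Function.comp]

lemma tail_comp {A B : Type} (f : A → B) {m : ℕ} (u : Fin (m+1) → A) :
    Fin.tail (f ∘ u) = f ∘ (Fin.tail u) := rfl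

/-- the key exact `T`-step identity for `H` on monomials -/
lemma Hh_sh_mon (m : ℕ) (u : Fin (m+1) → ℤ × S) :
    Hh s0 m (mon (sh ∘ u)) = Hh s0 m (mon u) - mon (Fin.cons ((0:ℤ), s0) u) := by
  cases m with
  | zero =>
    rw [Hh_zero_mon, Hh_zero_mon]
    have h1 : ((sh ∘ u) 0).1 = (u 0).1 + 1 := rfl
    have h2 : ((sh ∘ u) 0).2 = (u 0).2 := rfl
    rw [h1, h2, tele_succ]
    have h3 : (shL ((u 0).1) ∘ fun _ : Fin 1 => ((0:ℤ), (u 0).2)) = u := by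
      funext j
      have : j = 0 := Subsingleton.elim j 0
      subst this
      show shL ((u 0).1) ((0:ℤ), (u 0).2) = u 0
      simp [shL]
    rw [h3]
    abel
  | succ m =>
    rw [Hh_succ_mon, Hh_succ_mon]
    have h1 : ((sh ∘ u) 0).1 = (u 0).1 + 1 := rfl
    have h2 : ((sh ∘ u) 0).2 = (u 0).2 := rfl
    have h4 : (fun i : Fin (m+1) => shL (-((sh ∘ u) 0).1) (Fin.tail (sh ∘ u) i)) =
        (fun i : Fin (m+1) => shL (-(u 0).1) (Fin.tail u i)) := by
      funext i
      show shL (-((u 0).1+1)) (sh (u i.succ)) = shL (-(u 0).1) (u i.succ)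
      have : sh (u i.succ) = shL 1 (u i.succ) := rfl
      rw [this, shL_shL]
      congr 1
      ring
    have h5 : nuc s0 ((sh ∘ u) 0) = nuc s0 (u 0) := rfl
    rw [h4, h5, h1, h2, tele_succ]
    have h6 : (shL ((u 0).1) ∘ Fin.cons ((0:ℤ), (u 0).2)
        (fun i : Fin (m+1) => shL (-(u 0).1) (Fin.tail u i))) = u := by
      rw [comp_cons]
      have ha : shL ((u 0).1) ((0:ℤ), (u 0).2) = u 0 := by
        show ((0:ℤ) + (u 0).1, (u 0).2) = u 0
        rw [zero_add]
      have hb : (shL ((u 0).1) ∘ fun i : Fin (m+1) => shL (-(u 0).1) (Fin.tail u i)) =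
          Fin.tail u := by
        funext i
        show shL ((u 0).1) (shL (-(u 0).1) (Fin.tail u i)) = Fin.tail u i
        rw [shL_shL]
        simp [shL]
      rw [ha, hb, Fin.cons_self_tail]
    rw [h6]
    abel

/-- additive version of the `T`-step -/
lemma Hh_T (m : ℕ) (c : CR (ℤ × S) (m+1)) :
    Hh s0 m (T (m+1) c) = Hh s0 m c - consHom ((0:ℤ), s0) (m+1) c := by
  refine hom_ext_mon' (f := (Hh s0 m).comp (T (m+1)))
    (g := (Hh s0 m) - (consHom ((0:ℤ), s0) (m+1))) ?_ c
  intro w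
  simp only [AddMonoidHom.comp_apply, mapChains_mon, AddMonoidHom.sub_apply, consHom_mon]
  exact Hh_sh_mon s0 m w

/-- on level-0 first letters, `H` is given by the representative formula -/
lemma Hh_consHom (m : ℕ) (x : ℤ × S) (hx : x.1 = 0) (c : CR (ℤ × S) (m+1)) :
    Hh s0 (m+1) (consHom x (m+1) c) = - mulChain (nuc s0 x) (m+2) (Hh s0 m c) := by
  refine hom_ext_mon' (f := (Hh s0 (m+1)).comp (consHom x (m+1)))
    (g := -(mulChain (nuc s0 x) (m+2)).comp (Hh s0 m)) ?_ c
  intro w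
  simp only [AddMonoidHom.comp_apply, consHom_mon, AddMonoidHom.neg_apply]
  rw [Hh_succ_mon]
  have h0 : (Fin.cons x w : Fin (m+2) → ℤ × S) 0 = x := rfl
  rw [h0, hx]
  have h1 : (fun i : Fin (m+1) => shL (-(0:ℤ)) (Fin.tail (Fin.cons x w : Fin (m+2) → ℤ × S) i)) = w := by
    funext i
    simp [Fin.tail_cons, shL]
  rw [h1]
  simp only [neg_zero, tele_zero]
  abel

lemma Hh_consHom_zero (x : ℤ × S) (hx : x.1 = 0) (c : CR (ℤ × S) 0) :
    Hh s0 0 (consHom x 0 c) = 0 := by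
  refine hom_ext_mon' (f := (Hh s0 0).comp (consHom x 0)) (g := 0) ?_ c
  intro w
  simp only [AddMonoidHom.comp_apply, consHom_mon, AddMonoidHom.zero_apply]
  rw [Hh_zero_mon]
  have h0 : (Fin.cons x w : Fin 1 → ℤ × S) 0 = x := rfl
  rw [h0, hx, tele_zero, neg_zero]

/-! ### the projection Π -/

noncomputable def Pih : (m : ℕ) → (CR (ℤ × S) (m+1) →+ CR (ℤ × S) (m+1))
  | 0 => Finsupp.liftAddHom fun u => zmultiplesHom _ (mon (fun _ : Fin 1 => ((0:ℤ), (u 0).2)))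
  | (m+1) => Finsupp.liftAddHom fun u => zmultiplesHom _
      (mulChain (nuc s0 (u 0)) (m+1) (Pih m (mon (Fin.tail u))))

lemma Pih_zero_mon (u : Fin 1 → ℤ × S) :
    Pih s0 0 (mon u) = mon (fun _ : Fin 1 => ((0:ℤ), (u 0).2)) := by
  rw [Pih, mon]; simp

lemma Pih_succ_mon (m : ℕ) (u : Fin (m+2) → ℤ × S) :
    Pih s0 (m+1) (mon u) = mulChain (nuc s0 (u 0)) (m+1) (Pih s0 m (mon (Fin.tail u))) := by
  conv_lhs => rw [Pih, mon]
  simp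

lemma Pih_T (m : ℕ) (c : CR (ℤ × S) (m+1)) :
    Pih s0 m (T (m+1) c) = Pih s0 m c := by
  induction m with
  | zero =>
    refine hom_ext_mon' (f := (Pih s0 0).comp (T 1)) (g := Pih s0 0) ?_ c
    intro w
    simp only [AddMonoidHom.comp_apply, mapChains_mon]
    rw [Pih_zero_mon, Pih_zero_mon]
    rfl
  | succ m ih =>
    refine hom_ext_mon' (f := (Pih s0 (m+1)).comp (T (m+2))) (g := Pih s0 (m+1)) ?_ c
    intro w
    simp only [AddMonoidHom.comp_apply, mapChains_mon]
    rw [Pih_succ_mon, Pih_succ_mon]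
    have h5 : nuc s0 ((sh ∘ w) 0) = nuc s0 (w 0) := rfl
    rw [h5, tail_comp]
    have : mon (sh ∘ Fin.tail w) = T (m+1) (mon (Fin.tail w)) := by
      rw [mapChains_mon]
    rw [this, ih]

/-- shifted homotopy family (`H` in degree `m`, zero in degree `0`). -/
noncomputable def Hlow : (m : ℕ) → (CR (ℤ × S) m →+ CR (ℤ × S) (m+1))
  | 0 => 0
  | (m+1) => Hh s0 m

lemma Hh_consHom' (m : ℕ) (x : ℤ × S) (hx : x.1 = 0) (c : CR (ℤ × S) m) :
    Hh s0 m (consHom x m c) = - mulChain (nuc s0 x) (m+1) (Hlow s0 m c) := by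
  cases m with
  | zero =>
    rw [Hh_consHom_zero s0 x hx]
    show (0 : CR (ℤ×S) 2) = - mulChain (nuc s0 x) 1 ((0 : CR (ℤ×S) 0 →+ CR (ℤ×S) 1) c)
    simp
  | succ m => exact Hh_consHom s0 m x hx c

lemma Pih_consHom (m : ℕ) (x : ℤ × S) (c : CR (ℤ × S) (m+1)) :
    Pih s0 (m+1) (consHom x (m+1) c) = mulChain (nuc s0 x) (m+1) (Pih s0 m c) := by
  refine hom_ext_mon' (f := (Pih s0 (m+1)).comp (consHom x (m+1)))
    (g := (mulChain (nuc s0 x) (m+1)).comp (Pih s0 m)) ?_ c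
  intro w
  simp only [AddMonoidHom.comp_apply, consHom_mon]
  rw [Pih_succ_mon]
  have h1 : (Fin.cons x w : Fin (m+2) → ℤ × S) 0 = x := rfl
  have h2 : Fin.tail (Fin.cons x w : Fin (m+2) → ℤ × S) = w := by
    funext i
    show (Fin.cons x w : Fin (m+2) → ℤ × S) i.succ = w i
    exact Fin.cons_succ (α := fun _ : Fin (m+2) => ℤ × S) x w i
  rw [h1, h2]

/-- the generic `ℤ`-induction wrapper -/
lemma intWrap {M : ℕ} (F : CR (ℤ × S) (M+1) →+ CR (ℤ × S) (M+1))
    (hT : ∀ c, F (T (M+1) c) - T (M+1) c = F c - c)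
    (hrep : ∀ u : Fin (M+1) → ℤ × S, (u 0).1 = 0 → F (mon u) = mon u) :
    ∀ c, F c = c := by
  have key : ∀ (k : ℤ) (u₀ : Fin (M+1) → ℤ × S), (u₀ 0).1 = 0 →
      F (mon (shL k ∘ u₀)) = mon (shL k ∘ u₀) := by
    intro k
    induction k using Int.induction_on with
    | zero =>
      intro u₀ h₀
      have : shL 0 ∘ u₀ = u₀ := by rw [shL_zero]; rfl
      rw [this]; exact hrep u₀ h₀
    | succ i ihp =>
      intro u₀ h₀
      have hv : (sh ∘ (shL (i:ℤ) ∘ u₀)) = shL ((i:ℤ)+1) ∘ u₀ := by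
        funext j
        show sh (shL (i:ℤ) (u₀ j)) = shL ((i:ℤ)+1) (u₀ j)
        rw [sh_eq_shL, shL_shL]
        congr 1; ring
      have hTv : T (M+1) (mon (shL (i:ℤ) ∘ u₀)) = mon (shL ((i:ℤ)+1) ∘ u₀) := by
        rw [mapChains_mon, hv]
      have := hT (mon (shL (i:ℤ) ∘ u₀))
      rw [hTv, ihp u₀ h₀, sub_self] at this
      exact sub_eq_zero.mp this
    | pred i ihn =>
      intro u₀ h₀
      have hv : (sh ∘ (shL (-(i:ℤ)-1) ∘ u₀)) = shL (-(i:ℤ)) ∘ u₀ := by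
        funext j
        show sh (shL (-(i:ℤ)-1) (u₀ j)) = shL (-(i:ℤ)) (u₀ j)
        rw [sh_eq_shL, shL_shL]
        congr 1; ring
      have hTv : T (M+1) (mon (shL (-(i:ℤ)-1) ∘ u₀)) = mon (shL (-(i:ℤ)) ∘ u₀) := by
        rw [mapChains_mon, hv]
      have := hT (mon (shL (-(i:ℤ)-1) ∘ u₀))
      rw [hTv, ihn u₀ h₀, sub_self] at this
      exact sub_eq_zero.mp this.symm
  have hmon : ∀ u : Fin (M+1) → ℤ × S, F (mon u) = mon u := by
    intro u
    have h₀ : ((shL (-(u 0).1) ∘ u) 0).1 = 0 := by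
      show (shL (-(u 0).1) (u 0)).1 = 0
      rw [shL_fst]; ring
    have hu : shL ((u 0).1) ∘ (shL (-(u 0).1) ∘ u) = u := by
      funext j
      show shL ((u 0).1) (shL (-(u 0).1) (u j)) = u j
      rw [shL_shL]
      have : ((u 0).1 + -(u 0).1) = 0 := by ring
      rw [this]
      simp [shL]
    have := key ((u 0).1) (shL (-(u 0).1) ∘ u) h₀
    rw [hu] at this
    exact this
  exact hom_ext_mon' (f := F) (g := AddMonoidHom.id _) hmon

/-- The master homotopy identity: `d H + H d = 1 - Π`. -/
theorem claimD : ∀ (M : ℕ) (c : CR (ℤ × S) (M+1)),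
    d (shiftOp S) (M+1) (Hh s0 M c) + Hlow s0 M (d (shiftOp S) M c) + Pih s0 M c = c := by
  intro M
  induction M with
  | zero =>
    set F : CR (ℤ × S) 1 →+ CR (ℤ × S) 1 :=
      (d (shiftOp S) 1).comp (Hh s0 0) + (Hlow s0 0).comp (d (shiftOp S) 0) + Pih s0 0 with hF
    have hFc : ∀ c, F c = d (shiftOp S) 1 (Hh s0 0 c) + Hlow s0 0 (d (shiftOp S) 0 c)
        + Pih s0 0 c := fun c => rfl
    have hT : ∀ c, F (T 1 c) - T 1 c = F c - c := by
      intro c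
      rw [hFc, hFc, Hh_T, map_sub, d_consHom, Pih_T]
      have hz : d (shiftOp S) 0 c = 0 := d_zero_apply c
      have hz' : d (shiftOp S) 0 (T 1 c) = 0 := d_zero_apply _
      rw [hz, hz']
      simp only [map_zero]
      abel
    have hrep : ∀ u : Fin 1 → ℤ × S, (u 0).1 = 0 → F (mon u) = mon u := by
      intro u hu
      have hufun : (fun _ : Fin 1 => ((0:ℤ), (u 0).2)) = u := by
        funext j
        have hj : j = 0 := Subsingleton.elim j 0
        subst hj
        exact Prod.ext hu.symm rfl
      rw [hFc, Hh_zero_mon, hu, tele_zero, neg_zero, map_zero, d_zero_apply, map_zero,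
        Pih_zero_mon, hufun]
      simp
    intro c
    exact intWrap F hT hrep c
  | succ m ih =>
    set F : CR (ℤ × S) (m+2) →+ CR (ℤ × S) (m+2) :=
      (d (shiftOp S) (m+2)).comp (Hh s0 (m+1)) + (Hh s0 m).comp (d (shiftOp S) (m+1))
        + Pih s0 (m+1) with hF
    have hFc : ∀ c, F c = d (shiftOp S) (m+2) (Hh s0 (m+1) c)
        + Hh s0 m (d (shiftOp S) (m+1) c) + Pih s0 (m+1) c := fun c => rfl
    have hT : ∀ c, F (T (m+2) c) - T (m+2) c = F c - c := by
      intro c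
      rw [hFc, hFc, Hh_T, map_sub, d_consHom, d_T, Hh_T, Pih_T]
      abel
    have hrep : ∀ u : Fin (m+2) → ℤ × S, (u 0).1 = 0 → F (mon u) = mon u := by
      intro u hu
      have hcons : mon u = mon (Fin.cons (u 0) (Fin.tail u)) := by
        rw [Fin.cons_self_tail]
      set x := u 0 with hxdef
      set w := Fin.tail u with hwdef
      rw [hFc, hcons]
      have hA : Hh s0 (m+1) (mon (Fin.cons x w)) =
          - mulChain (nuc s0 x) (m+2) (Hh s0 m (mon w)) := by
        rw [← consHom_mon, Hh_consHom s0 m x hu]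
      have hdA : d (shiftOp S) (m+2) (Hh s0 (m+1) (mon (Fin.cons x w))) =
          mulChain (nuc s0 x) (m+1) (d (shiftOp S) (m+1) (Hh s0 m (mon w))) := by
        rw [hA, map_neg, d_mulChain, epsX_nuc, zero_smul, zero_sub, neg_neg]
      have hdc : d (shiftOp S) (m+1) (mon (Fin.cons x w)) =
          mon w - mon (sh ∘ w) - consHom x m (d (shiftOp S) m (mon w)) := by
        rw [d_mon, dMon_cons, d_mon]
      have hB : Hh s0 m (d (shiftOp S) (m+1) (mon (Fin.cons x w))) =
          mon (Fin.cons ((0:ℤ), s0) w)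
            + mulChain (nuc s0 x) (m+1) (Hlow s0 m (d (shiftOp S) m (mon w))) := by
        rw [hdc, map_sub, map_sub, Hh_sh_mon, Hh_consHom' s0 m x hu]
        abel
      have hPi : Pih s0 (m+1) (mon (Fin.cons x w)) =
          mulChain (nuc s0 x) (m+1) (Pih s0 m (mon w)) := by
        rw [← consHom_mon, Pih_consHom]
      have hIH : d (shiftOp S) (m+1) (Hh s0 m (mon w)) =
          mon w - Hlow s0 m (d (shiftOp S) m (mon w)) - Pih s0 m (mon w) := by
        rw [sub_sub, eq_sub_iff_add_eq, ← add_assoc]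
        exact ih (mon w)
      rw [hdA, hB, hPi, hIH]
      rw [map_sub, map_sub]
      have hnu : mulChain (nuc s0 x) (m+1) (mon w) =
          consHom ((0:ℤ), x.2) (m+1) (mon w) - consHom ((0:ℤ), s0) (m+1) (mon w) :=
        mulChain_nuc s0 x (m+1) (mon w)
      rw [hnu, consHom_mon, consHom_mon]
      have hx' : ((0:ℤ), x.2) = x := Prod.ext hu.symm rfl
      rw [hx']
      abel
    intro c
    exact intWrap F hT hrep c

/-! ### the retraction Θ -/

open scoped TensorProduct

/-- target group -/
abbrev Gt (S : Type) (n : ℕ) : Type :=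
  (PiTensorProduct ℤ (fun _ : Fin n => ↥(Saug S))) ⊗[ℤ] (S →₀ ℤ)

lemma aug_single (s : S) (k : ℤ) : aug S (Finsupp.single s k) = k := by
  simp [aug]

/-- `q(s) = s - s₀` in `S̄` -/
noncomputable def qs (s : S) : ↥(Saug S) :=
  ⟨Finsupp.single s 1 - Finsupp.single s0 1, by
    simp only [Saug, LinearMap.mem_ker, map_sub, aug_single, sub_self]⟩

/-- `q` for letters of `ℤ × S` -/
noncomputable def qS (x : ℤ × S) : ↥(Saug S) := qs s0 x.2

noncomputable def thetaMon (n : ℕ) (w : Fin (n+1) → ℤ × S) : Gt S n :=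
  (PiTensorProduct.tprod ℤ (fun i : Fin n => qS s0 (w i.castSucc))) ⊗ₜ[ℤ]
    (Finsupp.single (w (Fin.last n)).2 1)

noncomputable def theta (n : ℕ) : CR (ℤ × S) (n+1) →+ Gt S n :=
  Finsupp.liftAddHom fun w => zmultiplesHom _ (thetaMon s0 n w)

lemma theta_mon (n : ℕ) (w : Fin (n+1) → ℤ × S) :
    theta s0 n (mon w) = thetaMon s0 n w := by
  rw [theta, mon]; simp

lemma thetaMon_snd_congr (n : ℕ) (w w' : Fin (n+1) → ℤ × S)
    (h : ∀ j, (w j).2 = (w' j).2) : thetaMon s0 n w = thetaMon s0 n w' := by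
  rw [thetaMon, thetaMon]
  congr 1
  · congr 1
    funext i
    rw [qS, qS, h i.castSucc]
  · rw [h (Fin.last n)]

/-- Θ kills boundaries, term by term. -/
lemma theta_d (n : ℕ) (c : CR (ℤ × S) (n+2)) :
    theta s0 n (d (shiftOp S) (n+1) c) = 0 := by
  refine hom_ext_mon' (f := (theta s0 n).comp (d (shiftOp S) (n+1))) (g := 0) ?_ c
  intro w
  simp only [AddMonoidHom.comp_apply, d_mon, AddMonoidHom.zero_apply]
  rw [dMon, map_sum]
  refine Finset.sum_eq_zero (fun i _ => ?_)
  rw [map_zsmul, map_sub, theta_mon, theta_mon]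
  have h : thetaMon s0 n (del w i) = thetaMon s0 n (act (shiftOp S) w i) := by
    refine thetaMon_snd_congr s0 n _ _ (fun j => ?_)
    by_cases hj : (j : ℕ) < (i : ℕ) <;> simp [del, act, hj, shiftOp]
  rw [h, sub_self, smul_zero]

/-! ### linearity of prodChain -/

lemma mulChain_zero {X : Type} (n : ℕ) (c : CR X n) : mulChain 0 n c = 0 := by
  rw [mulChain_apply]; simp

lemma mulChain_smul {X : Type} (k : ℤ) (v : X →₀ ℤ) (n : ℕ) (c : CR X n) :
    mulChain (k • v) n c = k • mulChain v n c := by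
  rw [mulChain_apply, mulChain_apply, Finsupp.smul_sum]
  rw [Finsupp.sum_smul_index' (by intro a; simp)]
  refine Finsupp.sum_congr (fun x _ => ?_)
  simp [mul_zsmul]

lemma prodChain_c_add (n : ℕ) (v : Fin n → (S →₀ ℤ)) (c c' : S →₀ ℤ) :
    prodChain n v (c + c') = prodChain n v c + prodChain n v c' := by
  induction n with
  | zero => simp [prodChain, emb1, Finsupp.mapDomain_add]
  | succ m ih => simp [prodChain, ih, map_add]

lemma prodChain_c_smul (n : ℕ) (v : Fin n → (S →₀ ℤ)) (k : ℤ) (c : S →₀ ℤ) :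
    prodChain n v (k • c) = k • prodChain n v c := by
  induction n with
  | zero => simp [prodChain, emb1, Finsupp.mapDomain_smul]
  | succ m ih => simp [prodChain, ih, map_zsmul]

lemma tail_update_zero {A : Type} {n : ℕ} (v : Fin (n+1) → A) (z : A) :
    (fun j : Fin n => Function.update v 0 z j.succ) = (fun j : Fin n => v j.succ) := by
  funext j
  rw [Function.update_of_ne (Fin.succ_ne_zero j)]

lemma tail_update_succ {A : Type} {n : ℕ} (v : Fin (n+1) → A) (i : Fin n) (z : A) :
    (fun j : Fin n => Function.update v i.succ z j.succ) =
      Function.update (fun j : Fin n => v j.succ) i z := by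
  funext j
  by_cases h : j = i
  · subst h
    rw [Function.update_self, Function.update_self]
  · rw [Function.update_of_ne (fun hc => h (Fin.succ_injective _ hc)),
      Function.update_of_ne h]

lemma prodChain_succ_def (m : ℕ) (v : Fin (m+1) → (S →₀ ℤ)) (c : S →₀ ℤ) :
    prodChain (m+1) v c = mulChain ((v 0).mapDomain fun s => ((0:ℤ), s)) (m+1)
      (prodChain m (fun i => v i.succ) c) := rfl

lemma prodChain_update_add (n : ℕ) :
    ∀ (v : Fin n → (S →₀ ℤ)) (i : Fin n) (a b : S →₀ ℤ) (c : S →₀ ℤ),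
    prodChain n (Function.update v i (a + b)) c =
      prodChain n (Function.update v i a) c + prodChain n (Function.update v i b) c := by
  induction n with
  | zero => intro v i; exact i.elim0
  | succ m ih =>
    intro v i a b c
    refine Fin.cases ?_ (fun i' => ?_) i
    · rw [prodChain_succ_def, prodChain_succ_def, prodChain_succ_def]
      rw [Function.update_self, Function.update_self, Function.update_self,
        tail_update_zero, tail_update_zero, tail_update_zero,
        Finsupp.mapDomain_add, mulChain_add]
    · have h0 : ∀ z : S →₀ ℤ, Function.update v i'.succ z 0 = v 0 :=
        fun z => Function.update_of_ne (Ne.symm (Fin.succ_ne_zero i')) z v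
      rw [prodChain_succ_def, prodChain_succ_def, prodChain_succ_def]
      rw [h0, h0, h0, tail_update_succ, tail_update_succ, tail_update_succ, ih, map_add]

lemma prodChain_update_smul (n : ℕ) :
    ∀ (v : Fin n → (S →₀ ℤ)) (i : Fin n) (k : ℤ) (a : S →₀ ℤ) (c : S →₀ ℤ),
    prodChain n (Function.update v i (k • a)) c =
      k • prodChain n (Function.update v i a) c := by
  induction n with
  | zero => intro v i; exact i.elim0
  | succ m ih =>
    intro v i k a c
    refine Fin.cases ?_ (fun i' => ?_) i
    · rw [prodChain_succ_def, prodChain_succ_def]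
      rw [Function.update_self, Function.update_self,
        tail_update_zero, tail_update_zero,
        Finsupp.mapDomain_smul, mulChain_smul]
    · have h0 : ∀ z : S →₀ ℤ, Function.update v i'.succ z 0 = v 0 :=
        fun z => Function.update_of_ne (Ne.symm (Fin.succ_ne_zero i')) z v
      rw [prodChain_succ_def, prodChain_succ_def]
      rw [h0, h0, tail_update_succ, tail_update_succ, ih, map_zsmul]

/-! ### the multiplication map p -/

lemma comp_update {n : ℕ} (v : Fin n → ↥(Saug S)) (i : Fin n)
    (z : ↥(Saug S)) :
    (fun j => ((Function.update v i z j : ↥(Saug S)) : S →₀ ℤ)) =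
      Function.update (fun j => ((v j : ↥(Saug S)) : S →₀ ℤ)) i (z : S →₀ ℤ) := by
  funext j
  by_cases h : j = i
  · subst h; rw [Function.update_self, Function.update_self]
  · rw [Function.update_of_ne h, Function.update_of_ne h]

/-- the underlying multilinear map of `p` -/
noncomputable def Mmap (n : ℕ) :
    MultilinearMap ℤ (fun _ : Fin n => ↥(Saug S)) ((S →₀ ℤ) →ₗ[ℤ] CR (ℤ × S) (n+1)) where
  toFun v :=
    { toFun := fun c => prodChain n (fun i => ((v i : ↥(Saug S)) : S →₀ ℤ)) c
      map_add' := fun c c' => prodChain_c_add n _ c c'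
      map_smul' := fun k c => prodChain_c_smul n _ k c }
  map_update_add' := by
    intro inst v i x y
    have hinst : inst = instDecidableEqFin n := Subsingleton.elim _ _
    subst hinst
    apply LinearMap.ext
    intro c
    simp only [LinearMap.coe_mk, AddHom.coe_mk, LinearMap.add_apply]
    rw [comp_update, comp_update, comp_update]
    exact prodChain_update_add n _ i _ _ c
  map_update_smul' := by
    intro inst v i k x
    have hinst : inst = instDecidableEqFin n := Subsingleton.elim _ _
    subst hinst
    apply LinearMap.ext
    intro c
    simp only [LinearMap.coe_mk, AddHom.coe_mk, LinearMap.smul_apply]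
    rw [comp_update, comp_update]
    exact prodChain_update_smul n _ i k _ c

/-- the chain-level multiplication map -/
noncomputable def plin (n : ℕ) : Gt S n →ₗ[ℤ] CR (ℤ × S) (n+1) :=
  TensorProduct.lift (PiTensorProduct.lift (Mmap n))

lemma plin_tmul (n : ℕ) (v : Fin n → ↥(Saug S)) (y : S →₀ ℤ) :
    plin n ((PiTensorProduct.tprod ℤ v) ⊗ₜ[ℤ] y) =
      prodChain n (fun i => ((v i : ↥(Saug S)) : S →₀ ℤ)) y := by
  rw [plin]
  erw [TensorProduct.lift.tmul, PiTensorProduct.lift.tprod]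
  simp [Mmap]

/-- induction principle for the tensor product -/
lemma Gind {n : ℕ} {P : Gt S n → Prop} (h0 : P 0)
    (hadd : ∀ a b, P a → P b → P (a + b))
    (hp : ∀ (v : Fin n → ↥(Saug S)) (y : S →₀ ℤ), P ((PiTensorProduct.tprod ℤ v) ⊗ₜ[ℤ] y)) :
    ∀ g, P g := by
  intro g
  induction g using TensorProduct.induction_on with
  | zero => exact h0
  | add a b ha hb => exact hadd a b ha hb
  | tmul x y =>
    induction x using PiTensorProduct.induction_on with
    | smul_tprod r f =>
      have : (r • PiTensorProduct.tprod ℤ f) ⊗ₜ[ℤ] y =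
          (PiTensorProduct.tprod ℤ f) ⊗ₜ[ℤ] (r • y) := TensorProduct.smul_tmul r _ y
      rw [this]
      exact hp f (r • y)
    | add x₁ x₂ h₁ h₂ =>
      rw [TensorProduct.add_tmul]
      exact hadd _ _ h₁ h₂

lemma epsX_mapDomain (v : S →₀ ℤ) :
    epsX (v.mapDomain fun s => ((0:ℤ), s)) = aug S v := by
  induction v using Finsupp.induction with
  | zero => simp
  | single_add s k v hs hk ih =>
    rw [Finsupp.mapDomain_add, map_add, ih, map_add, Finsupp.mapDomain_single,
      epsX_single, aug_single]

/-- products of augmentation-zero elements are cycles -/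
lemma d_prodChain (n : ℕ) :
    ∀ (v : Fin n → (S →₀ ℤ)), (∀ i, aug S (v i) = 0) → ∀ (c : S →₀ ℤ),
    d (shiftOp S) n (prodChain n v c) = 0 := by
  induction n with
  | zero => intro v hv c; exact d_zero_apply _
  | succ m ih =>
    intro v hv c
    rw [prodChain_succ_def, d_mulChain, epsX_mapDomain, hv 0, zero_smul, zero_sub,
      ih (fun i => v i.succ) (fun i => hv i.succ) c, map_zero, neg_zero]

lemma plin_mem_ZC (n : ℕ) (g : Gt S n) : plin n g ∈ ZC (shiftOp S) (n+1) := by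
  show plin n g ∈ (d (shiftOp S) n).ker
  rw [AddMonoidHom.mem_ker]
  induction g using Gind with
  | h0 => simp
  | hadd a b ha hb => rw [map_add, map_add, ha, hb, add_zero]
  | hp v y =>
    rw [plin_tmul]
    exact d_prodChain n _ (fun i => (v i).2) y

/-! ### pΘ = Π -/

lemma theta_mon_cons (n : ℕ) (x : ℤ × S) (w : Fin (n+1) → ℤ × S) :
    thetaMon s0 (n+1) (Fin.cons x w) =
      (PiTensorProduct.tprod ℤ (Fin.cons (qS s0 x) (fun i : Fin n => qS s0 (w i.castSucc)))) ⊗ₜ[ℤ]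
        (Finsupp.single (w (Fin.last n)).2 1) := by
  have hfam : (fun i : Fin (n+1) => qS s0 ((Fin.cons x w : Fin (n+2) → ℤ × S) i.castSucc)) =
      Fin.cons (qS s0 x) (fun i : Fin n => qS s0 (w i.castSucc)) := by
    funext j
    refine Fin.cases ?_ (fun j' => ?_) j
    · have h1 : ((0 : Fin (n+1)).castSucc) = (0 : Fin (n+2)) := rfl
      rw [h1]
      have h2 : (Fin.cons x w : Fin (n+2) → ℤ × S) 0 = x := rfl
      rw [h2, Fin.cons_zero]
    · have h1 : (j'.succ).castSucc = (j'.castSucc).succ := (Fin.succ_castSucc j').symm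
      rw [Fin.cons_succ, h1]
      have h2 : (Fin.cons x w : Fin (n+2) → ℤ × S) (j'.castSucc).succ = w j'.castSucc :=
        Fin.cons_succ (α := fun _ : Fin (n+2) => ℤ × S) x w j'.castSucc
      rw [h2]
  have hlast : (Fin.cons x w : Fin (n+2) → ℤ × S) (Fin.last (n+1)) = w (Fin.last n) := by
    have h1 : (Fin.last (n+1)) = (Fin.last n).succ := (Fin.succ_last n).symm
    rw [h1]
    exact Fin.cons_succ (α := fun _ : Fin (n+2) => ℤ × S) x w (Fin.last n)
  rw [thetaMon, hfam, hlast]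

lemma mapDomain_qs (x : ℤ × S) :
    Finsupp.mapDomain (fun s => ((0:ℤ), s)) ((qS s0 x : S →₀ ℤ)) = nuc s0 x := by
  show Finsupp.mapDomain (fun s => ((0:ℤ), s))
    (Finsupp.single x.2 1 - Finsupp.single s0 1) = nuc s0 x
  have hneg : (Finsupp.single x.2 1 - Finsupp.single s0 1 : S →₀ ℤ) =
      Finsupp.single x.2 1 + (-1 : ℤ) • Finsupp.single s0 (1:ℤ) := by
    simp [sub_eq_add_neg]
  rw [hneg, Finsupp.mapDomain_add, Finsupp.mapDomain_smul, Finsupp.mapDomain_single,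
    Finsupp.mapDomain_single, nuc]
  simp [sub_eq_add_neg]

lemma pTheta (n : ℕ) : ∀ c : CR (ℤ × S) (n+1), plin n (theta s0 n c) = Pih s0 n c := by
  induction n with
  | zero =>
    refine hom_ext_mon' (f := ((plin 0).toAddMonoidHom).comp (theta s0 0)) (g := Pih s0 0) ?_
    intro w
    simp only [AddMonoidHom.comp_apply, LinearMap.toAddMonoidHom_coe]
    rw [theta_mon, thetaMon, plin_tmul, Pih_zero_mon]
    show emb1 (Finsupp.single (w (Fin.last 0)).2 1) = _
    rw [emb1, Finsupp.mapDomain_single]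
    have : w (Fin.last 0) = w 0 := rfl
    rw [this, mon]
  | succ m ih =>
    refine hom_ext_mon' (f := ((plin (m+1)).toAddMonoidHom).comp (theta s0 (m+1)))
      (g := Pih s0 (m+1)) ?_
    intro w
    simp only [AddMonoidHom.comp_apply, LinearMap.toAddMonoidHom_coe]
    have hw : mon w = mon (Fin.cons (w 0) (Fin.tail w)) := by rw [Fin.cons_self_tail]
    rw [hw, theta_mon, theta_mon_cons, plin_tmul]
    rw [prodChain_succ_def]
    have h0 : ((Fin.cons (qS s0 (w 0)) (fun i : Fin m => qS s0 ((Fin.tail w) i.castSucc))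
        : Fin (m+1) → ↥(Saug S)) 0 : S →₀ ℤ) = (qS s0 (w 0) : S →₀ ℤ) := by
      rw [Fin.cons_zero]
    have hsucc : (fun i : Fin m => ((Fin.cons (qS s0 (w 0))
        (fun i : Fin m => qS s0 ((Fin.tail w) i.castSucc)) : Fin (m+1) → ↥(Saug S)) i.succ : S →₀ ℤ)) =
        (fun i : Fin m => (qS s0 ((Fin.tail w) i.castSucc) : S →₀ ℤ)) := by
      funext i
      rw [Fin.cons_succ]
    rw [h0, hsucc, mapDomain_qs]
    have hip : prodChain m (fun i => (qS s0 ((Fin.tail w) i.castSucc) : S →₀ ℤ))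
        (Finsupp.single ((Fin.tail w) (Fin.last m)).2 1) = Pih s0 m (mon (Fin.tail w)) := by
      have := ih (mon (Fin.tail w))
      rw [theta_mon, thetaMon, plin_tmul] at this
      exact this
    rw [hip]
    rw [Pih_succ_mon]
    have h1 : (Fin.cons (w 0) (Fin.tail w) : Fin (m+2) → ℤ × S) 0 = w 0 := rfl
    have h2 : Fin.tail (Fin.cons (w 0) (Fin.tail w) : Fin (m+2) → ℤ × S) = Fin.tail w := by
      funext i
      show (Fin.cons (w 0) (Fin.tail w) : Fin (m+2) → ℤ × S) i.succ = Fin.tail w i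
      exact Fin.cons_succ (α := fun _ : Fin (m+2) => ℤ × S) (w 0) (Fin.tail w) i
    rw [h1, h2]

/-! ### Θ ∘ p = id -/

/-- prepend a fixed tensor slot -/
noncomputable def consML {n : ℕ} (a : ↥(Saug S)) :
    MultilinearMap ℤ (fun _ : Fin n => ↥(Saug S))
      (PiTensorProduct ℤ (fun _ : Fin (n+1) => ↥(Saug S))) where
  toFun v := PiTensorProduct.tprod ℤ (Fin.cons a v)
  map_update_add' := by
    intro inst v i x y
    have hinst : inst = instDecidableEqFin n := Subsingleton.elim _ _
    subst hinst
    simp only [Fin.cons_update]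
    exact MultilinearMap.map_update_add (PiTensorProduct.tprod ℤ)
      (Fin.cons a v : Fin (n+1) → ↥(Saug S)) i.succ x y
  map_update_smul' := by
    intro inst v i k x
    have hinst : inst = instDecidableEqFin n := Subsingleton.elim _ _
    subst hinst
    simp only [Fin.cons_update]
    exact MultilinearMap.map_update_smul (PiTensorProduct.tprod ℤ)
      (Fin.cons a v : Fin (n+1) → ↥(Saug S)) i.succ k x

noncomputable def consG {n : ℕ} (a : ↥(Saug S)) : Gt S n →ₗ[ℤ] Gt S (n+1) :=
  TensorProduct.map (PiTensorProduct.lift (consML a)) LinearMap.id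

lemma consG_tmul {n : ℕ} (a : ↥(Saug S)) (v : Fin n → ↥(Saug S)) (y : S →₀ ℤ) :
    consG a ((PiTensorProduct.tprod ℤ v) ⊗ₜ[ℤ] y) =
      (PiTensorProduct.tprod ℤ (Fin.cons a v)) ⊗ₜ[ℤ] y := by
  rw [consG]
  erw [TensorProduct.map_tmul, PiTensorProduct.lift.tprod]
  rfl

lemma consG_add {n : ℕ} (a b : ↥(Saug S)) (g : Gt S n) :
    consG (a + b) g = consG a g + consG b g := by
  induction g using Gind with
  | h0 => simp
  | hadd u u' hu hu' =>
    rw [map_add, map_add, map_add, hu, hu']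
    abel
  | hp v y =>
    rw [consG_tmul, consG_tmul, consG_tmul, ← TensorProduct.add_tmul]
    congr 1
    have key := MultilinearMap.map_update_add (PiTensorProduct.tprod ℤ)
      (Fin.cons a v : Fin (n+1) → ↥(Saug S)) (0 : Fin (n+1)) a b
    rw [Fin.update_cons_zero, Fin.update_cons_zero, Fin.update_cons_zero] at key
    exact key

lemma consG_smul {n : ℕ} (k : ℤ) (a : ↥(Saug S)) (g : Gt S n) :
    consG (k • a) g = k • consG a g := by
  induction g using Gind with
  | h0 => simp
  | hadd u u' hu hu' => rw [map_add, map_add, hu, hu', smul_add]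
  | hp v y =>
    rw [consG_tmul, consG_tmul]
    have key := MultilinearMap.map_update_smul (PiTensorProduct.tprod ℤ)
      (Fin.cons a v : Fin (n+1) → ↥(Saug S)) (0 : Fin (n+1)) k a
    rw [Fin.update_cons_zero, Fin.update_cons_zero] at key
    rw [key]
    simp [TensorProduct.smul_tmul']

lemma consG_zero_slot {n : ℕ} (g : Gt S n) : consG (0 : ↥(Saug S)) g = 0 := by
  induction g using Gind with
  | h0 => simp
  | hadd u u' hu hu' => rw [map_add, hu, hu', add_zero]
  | hp v y =>
    rw [consG_tmul]
    have key := MultilinearMap.map_coord_zero (PiTensorProduct.tprod ℤ)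
      (m := (Fin.cons (0 : ↥(Saug S)) v : Fin (n+1) → ↥(Saug S))) (0 : Fin (n+1))
      (by rw [Fin.cons_zero])
    rw [key, TensorProduct.zero_tmul]

/-- collapse a letter chain to an element of S̄ -/
noncomputable def QX : ((ℤ × S) →₀ ℤ) →+ ↥(Saug S) :=
  Finsupp.liftAddHom fun x => zmultiplesHom _ (qS s0 x)

@[simp] lemma QX_single (x : ℤ × S) (k : ℤ) : QX s0 (Finsupp.single x k) = k • qS s0 x := by
  simp [QX]

/-- Θ of a cons -/
lemma theta_consHom (n : ℕ) (x : ℤ × S) (c : CR (ℤ × S) (n+1)) :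
    theta s0 (n+1) (consHom x (n+1) c) = consG (qS s0 x) (theta s0 n c) := by
  refine hom_ext_mon' (f := (theta s0 (n+1)).comp (consHom x (n+1)))
    (g := ((consG (qS s0 x)).toAddMonoidHom).comp (theta s0 n)) ?_ c
  intro w
  simp only [AddMonoidHom.comp_apply, consHom_mon, LinearMap.toAddMonoidHom_coe]
  rw [theta_mon, theta_mon, theta_mon_cons, thetaMon, consG_tmul]

/-- Θ of a product -/
lemma theta_mulChain (n : ℕ) (u : (ℤ × S) →₀ ℤ) (c : CR (ℤ × S) (n+1)) :
    theta s0 (n+1) (mulChain u (n+1) c) = consG (QX s0 u) (theta s0 n c) := by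
  induction u using Finsupp.induction with
  | zero => rw [mulChain_zero, map_zero, map_zero, consG_zero_slot]
  | single_add x k u hx hk ih =>
    rw [mulChain_add, map_add, ih, mulChain_single, map_zsmul, theta_consHom,
      map_add, QX_single, consG_add, consG_smul]
    try abel

lemma QX_mapDomain (v : S →₀ ℤ) :
    QX s0 (v.mapDomain fun s => ((0:ℤ), s)) = v.sum (fun s k => k • qs s0 s) := by
  induction v using Finsupp.induction with
  | zero => simp
  | single_add s k v hs hk ih =>
    rw [Finsupp.mapDomain_add, map_add, ih, Finsupp.mapDomain_single, QX_single,
      Finsupp.sum_add_index' (by intro a; simp) (by intro a b₁ b₂; rw [add_zsmul]),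
      Finsupp.sum_single_index (by simp)]
    rfl

/-- value of QS-collapse -/
lemma QX_coe (v : S →₀ ℤ) :
    ((v.sum (fun s k => k • qs s0 s) : ↥(Saug S)) : S →₀ ℤ)
      = v - (aug S v) • Finsupp.single s0 1 := by
  induction v using Finsupp.induction with
  | zero => simp
  | single_add s k v hs hk ih =>
    rw [Finsupp.sum_add_index' (by intro a; simp) (by intro a b₁ b₂; rw [add_zsmul]),
      Finsupp.sum_single_index (by simp)]
    push_cast [ih]
    rw [map_add, aug_single]
    have hcoe : ((qs s0 s : ↥(Saug S)) : S →₀ ℤ) = Finsupp.single s 1 - Finsupp.single s0 1 := rfl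
    rw [hcoe, smul_sub, add_zsmul, Finsupp.smul_single, smul_eq_mul, mul_one]
    abel

/-- Θ of a product chain -/
lemma theta_prodChain (n : ℕ) :
    ∀ (v : Fin n → (S →₀ ℤ)) (y : S →₀ ℤ),
    theta s0 n (prodChain n v y) =
      (PiTensorProduct.tprod ℤ (fun i => (v i).sum (fun s k => k • qs s0 s))) ⊗ₜ[ℤ] y := by
  induction n with
  | zero =>
    intro v y
    induction y using Finsupp.induction_linear with
    | zero => simp [prodChain, emb1]
    | add a b ha hb => rw [prodChain_c_add, map_add, ha, hb, TensorProduct.tmul_add]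
    | single s k =>
      show theta s0 0 (emb1 (Finsupp.single s k)) = _
      rw [emb1, Finsupp.mapDomain_single]
      have : (Finsupp.single (fun _ : Fin 1 => ((0:ℤ), s)) k : CR (ℤ × S) 1) =
          k • mon (fun _ : Fin 1 => ((0:ℤ), s)) := by
        rw [mon, Finsupp.smul_single, smul_eq_mul, mul_one]
      rw [this, map_zsmul, theta_mon, thetaMon]
      rw [← TensorProduct.tmul_smul, Finsupp.smul_single, smul_eq_mul, mul_one]
      congr 1
      exact congrArg _ (funext fun i : Fin 0 => i.elim0)
  | succ m ih =>
    intro v y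
    rw [prodChain_succ_def, theta_mulChain, ih, QX_mapDomain, consG_tmul]
    congr 1
    congr 1
    funext j
    refine Fin.cases ?_ (fun j' => ?_) j
    · rw [Fin.cons_zero]
    · rw [Fin.cons_succ]

/-- Θ ∘ p = id -/
lemma thetaP (n : ℕ) : ∀ g : Gt S n, theta s0 n (plin n g) = g := by
  intro g
  induction g using Gind with
  | h0 => simp
  | hadd a b ha hb => rw [map_add, map_add, ha, hb]
  | hp v y =>
    rw [plin_tmul, theta_prodChain]
    congr 2
    funext i
    apply Subtype.ext
    rw [QX_coe]
    have h2 : aug S ((v i : S →₀ ℤ)) = 0 := (v i).2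
    rw [h2, zero_smul, sub_zero]

/-! ### assembly -/

/-- the induced map on homology -/
noncomputable def pbar (n : ℕ) : Gt S n →+ HR (ℤ × S) (shiftOp S) (n+1) where
  toFun g := QuotientAddGroup.mk (⟨plin n g, plin_mem_ZC n g⟩ : ↥(ZC (shiftOp S) (n+1)))
  map_zero' := by
    have h : (⟨plin n 0, plin_mem_ZC n 0⟩ : ↥(ZC (shiftOp S) (n+1))) = 0 :=
      Subtype.ext (map_zero _)
    show QuotientAddGroup.mk (⟨plin n 0, plin_mem_ZC n 0⟩ : ↥(ZC (shiftOp S) (n+1))) = 0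
    rw [h]
    rfl
  map_add' a b := by
    have h : (⟨plin n (a+b), plin_mem_ZC n (a+b)⟩ : ↥(ZC (shiftOp S) (n+1))) =
        ⟨plin n a, plin_mem_ZC n a⟩ + ⟨plin n b, plin_mem_ZC n b⟩ :=
      Subtype.ext (map_add _ a b)
    show QuotientAddGroup.mk (⟨plin n (a+b), plin_mem_ZC n (a+b)⟩ : ↥(ZC (shiftOp S) (n+1))) = _
    rw [h]
    rfl

lemma pbar_apply (n : ℕ) (g : Gt S n) :
    pbar n g = QuotientAddGroup.mk (⟨plin n g, plin_mem_ZC n g⟩ : ↥(ZC (shiftOp S) (n+1))) :=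
  rfl

/-- the induced retraction on homology -/
noncomputable def thetaBar (n : ℕ) :
    HR (ℤ × S) (shiftOp S) (n+1) →+ Gt S n :=
  QuotientAddGroup.lift _ ((theta s0 n).comp (ZC (shiftOp S) (n+1)).subtype) (by
    intro z hz
    have hb : (↑z : CR (ℤ × S) (n+1)) ∈ BC (shiftOp S) (n+1) :=
      (AddSubgroup.mem_addSubgroupOf).mp hz
    rcases hb with ⟨c, hc⟩
    show theta s0 n (↑z : CR (ℤ × S) (n+1)) = 0
    rw [← hc, theta_d])

lemma thetaBar_mk (n : ℕ) (z : ↥(ZC (shiftOp S) (n+1))) :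
    thetaBar s0 n (QuotientAddGroup.mk z) = theta s0 n (↑z) := rfl

end FRH

/-- The multiplication map `S̄^{⊗ n} ⊗ ℤS → HR_{n+1}(ℤ × S, +1)`,
`v₁ ⊗ ⋯ ⊗ v_n ⊗ s ↦ [v₁⋯v_n·s]`, is an isomorphism of abelian groups. -/
theorem free_rack_homology_iso (S : Type) (n : ℕ) :
    ∃ e : (PiTensorProduct ℤ (fun _ : Fin n => ↥(Saug S)) ⊗[ℤ] (S →₀ ℤ)) ≃+
        HR (ℤ × S) (shiftOp S) (n+1),
      ∀ (v : Fin n → ↥(Saug S)) (s : S)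
        (h : prodChain n (fun i => ((v i : S →₀ ℤ))) (Finsupp.single s 1) ∈
          ZC (shiftOp S) (n+1)),
        e (PiTensorProduct.tprod ℤ v ⊗ₜ[ℤ] Finsupp.single s 1) =
          QuotientAddGroup.mk (⟨_, h⟩ : ↥(ZC (shiftOp S) (n+1))) := by
  rcases isEmpty_or_nonempty S with hS | hS
  · haveI hCR : Subsingleton (CR (ℤ × S) (n+1)) := by
      constructor
      intro a b
      apply Finsupp.ext
      intro w
      exact (IsEmpty.false (w 0).2).elim
    haveI hZs : Subsingleton ↥(ZC (shiftOp S) (n+1)) :=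
      ⟨fun a b => Subtype.ext (Subsingleton.elim _ _)⟩
    haveI hHR : Subsingleton (HR (ℤ × S) (shiftOp S) (n+1)) := by
      constructor
      intro a b
      refine QuotientAddGroup.induction_on a (fun x => ?_)
      refine QuotientAddGroup.induction_on b (fun y => ?_)
      exact congrArg _ (Subsingleton.elim x y)
    haveI hG0 : Subsingleton (S →₀ ℤ) := by
      constructor
      intro a b
      apply Finsupp.ext
      intro s
      exact (IsEmpty.false s).elim
    have hGz : ∀ g : (PiTensorProduct ℤ (fun _ : Fin n => ↥(Saug S)) ⊗[ℤ] (S →₀ ℤ)), g = 0 := by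
      intro g
      induction g using FRH.Gind with
      | h0 => rfl
      | hadd u u' hu hu' => rw [hu, hu', add_zero]
      | hp v y =>
        rw [Subsingleton.elim y (0 : S →₀ ℤ), TensorProduct.tmul_zero]
    haveI hGt : Subsingleton (PiTensorProduct ℤ (fun _ : Fin n => ↥(Saug S)) ⊗[ℤ] (S →₀ ℤ)) := by
      constructor
      intro a b
      rw [hGz a, hGz b]
    refine ⟨{ toFun := fun _ => 0, invFun := fun _ => 0,
              left_inv := fun g => Subsingleton.elim _ _,
              right_inv := fun h => Subsingleton.elim _ _,
              map_add' := by intro a b; rw [add_zero] }, ?_⟩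
    intro v s h
    exact Subsingleton.elim _ _
  · obtain ⟨s0⟩ := hS
    refine ⟨{ toFun := FRH.pbar n, invFun := FRH.thetaBar s0 n,
              left_inv := ?_, right_inv := ?_,
              map_add' := map_add (FRH.pbar n) }, ?_⟩
    · intro g
      show FRH.thetaBar s0 n (FRH.pbar n g) = g
      rw [FRH.pbar_apply, FRH.thetaBar_mk]
      exact FRH.thetaP s0 n g
    · intro hcl
      refine QuotientAddGroup.induction_on hcl (fun z => ?_)
      show FRH.pbar n (FRH.thetaBar s0 n (QuotientAddGroup.mk z)) = QuotientAddGroup.mk z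
      rw [FRH.thetaBar_mk, FRH.pbar_apply]
      rw [QuotientAddGroup.eq]
      rw [AddSubgroup.mem_addSubgroupOf]
      have hker : (↑z : CR (ℤ × S) (n+1)) ∈ (d (shiftOp S) n).ker := z.2
      have hz : d (shiftOp S) n (↑z : CR (ℤ × S) (n+1)) = 0 :=
        AddMonoidHom.mem_ker.mp hker
      have hth : FRH.plin n (FRH.theta s0 n (↑z : CR (ℤ × S) (n+1))) =
          FRH.Pih s0 n (↑z : CR (ℤ × S) (n+1)) := FRH.pTheta s0 n _
      have hcl2 := FRH.claimD s0 n (↑z : CR (ℤ × S) (n+1))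
      rw [hz, map_zero, add_zero] at hcl2
      show (↑(-(⟨FRH.plin n (FRH.theta s0 n (↑z : CR (ℤ × S) (n+1))),
          FRH.plin_mem_ZC n _⟩ : ↥(ZC (shiftOp S) (n+1))) + z) : CR (ℤ × S) (n+1))
          ∈ BC (shiftOp S) (n+1)
      have hco : (↑(-(⟨FRH.plin n (FRH.theta s0 n (↑z : CR (ℤ × S) (n+1))),
          FRH.plin_mem_ZC n _⟩ : ↥(ZC (shiftOp S) (n+1))) + z) : CR (ℤ × S) (n+1)) =
          -(FRH.plin n (FRH.theta s0 n (↑z : CR (ℤ × S) (n+1)))) + ↑z := rfl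
      rw [hco, hth]
      refine ⟨FRH.Hh s0 n (↑z : CR (ℤ × S) (n+1)), ?_⟩
      refine (eq_neg_add_iff_add_eq).mpr ?_
      rw [add_comm ((FRH.Pih s0 n) (↑z : CR (ℤ × S) (n+1)))
        ((d (shiftOp S) (n+1)) ((FRH.Hh s0 n) (↑z : CR (ℤ × S) (n+1))))]
      exact hcl2
    · intro v s h
      show FRH.pbar n (PiTensorProduct.tprod ℤ v ⊗ₜ[ℤ] Finsupp.single s 1) = _
      rw [FRH.pbar_apply]
      congr 1
      exact Subtype.ext (FRH.plin_tmul n v (Finsupp.single s 1))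
end

section
/- For the free permutation rack on a finite set of r orbits, the rank of HR_n is r(r−1)^{n−1} = (r−1)^n + (r−1)^{n−1} for all n ≥ 1, and HR_n is a free abelian group. -/
/- ============  auxiliary development  ============ -/

namespace FreeRackProof

open Finsupp

variable {X : Type}

theorem d_mon (op : X → X → X) (n : ℕ) (w : Fin (n+1) → X) :
    d op n (mon w) = dMon op w := by
  simp [d, mon, Finsupp.liftAddHom_apply_single]

theorem consHom_mon (x : X) (n : ℕ) (w : Fin n → X) :
    consHom x n (mon w) = mon (Fin.cons x w) := by
  simp [consHom, mon, Finsupp.liftAddHom_apply_single]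

/-- `mulChain` as an additive hom in its first argument. -/
noncomputable def MH (n : ℕ) : (X →₀ ℤ) →+ (CR X n →+ CR X (n+1)) :=
  Finsupp.liftAddHom fun x => zmultiplesHom _ (consHom x n)

theorem mulChain_eq (v : X →₀ ℤ) (n : ℕ) : mulChain v n = MH n v := by
  simp [mulChain, MH, Finsupp.liftAddHom_apply, Finsupp.sum]

theorem mulChain_single (a : X) (n : ℕ) : mulChain (Finsupp.single a 1) n = consHom a n := by
  simp [mulChain_eq, MH, Finsupp.liftAddHom_apply_single]

theorem mulChain_add (v v' : X →₀ ℤ) (n : ℕ) :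
    mulChain (v + v') n = mulChain v n + mulChain v' n := by
  simp [mulChain_eq]

theorem mulChain_sub (v v' : X →₀ ℤ) (n : ℕ) :
    mulChain (v - v') n = mulChain v n - mulChain v' n := by
  simp [mulChain_eq]

theorem mulChain_zero (n : ℕ) : mulChain (0 : X →₀ ℤ) n = 0 := by
  simp [mulChain_eq]

variable {S : Type}

/-- shift on `ℤ × S`. -/
def sh (p : ℤ × S) : ℤ × S := (p.1 + 1, p.2)

/-- shift as hom on `ℤ[ℤ×S]`. -/
noncomputable def SH : ((ℤ × S) →₀ ℤ) →+ ((ℤ × S) →₀ ℤ) :=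
  Finsupp.mapDomain.addMonoidHom sh

theorem SH_single (q : ℤ) (s : S) :
    SH (Finsupp.single ((q, s) : ℤ × S) 1) = Finsupp.single ((q + 1, s) : ℤ × S) 1 := by
  simp [SH, Finsupp.mapDomain.addMonoidHom_apply, Finsupp.mapDomain_single, sh]

noncomputable def NbN (k : ℕ) (s : S) : (ℤ × S) →₀ ℤ :=
  ∑ i ∈ Finset.range k, Finsupp.single ((i : ℤ), s) 1

noncomputable def NbM (k : ℕ) (s : S) : (ℤ × S) →₀ ℤ :=
  ∑ i ∈ Finset.range k, Finsupp.single ((-(i:ℤ) - 1 : ℤ), s) 1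

/-- `Nb q s` is `1 + t + ... + t^{q-1}` (suitably interpreted for negative `q`). -/
noncomputable def Nb (q : ℤ) (s : S) : (ℤ × S) →₀ ℤ :=
  if 0 ≤ q then NbN q.toNat s else -(NbM (-q).toNat s)

theorem Nb_succ_sub (q : ℤ) (s : S) :
    Nb (q+1) s - Nb q s = Finsupp.single (q, s) 1 := by
  rcases le_or_gt 0 q with h | h
  · have h1 : (0:ℤ) ≤ q + 1 := by omega
    have h2 : (q+1).toNat = q.toNat + 1 := by omega
    rw [Nb, Nb, if_pos h1, if_pos h, h2]
    simp only [NbN, Finset.sum_range_succ]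
    simp [Int.toNat_of_nonneg h]
  · rcases eq_or_lt_of_le (by omega : q ≤ -1) with h1 | h1
    · subst h1
      norm_num [Nb, NbN, NbM, Finset.sum_range_one]
    · have hq1 : ¬ (0:ℤ) ≤ q + 1 := by omega
      have h2 : (-q).toNat = (-(q+1)).toNat + 1 := by omega
      rw [Nb, Nb, if_neg hq1, if_neg (by omega), h2]
      simp only [NbM, Finset.sum_range_succ]
      have h3 : (-((-(q+1)).toNat : ℤ) - 1) = q := by omega
      rw [h3]
      abel

theorem Nb_shift (q : ℤ) (s : S) :
    Nb q s - SH (Nb q s)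
      = Finsupp.single ((0:ℤ), s) 1 - Finsupp.single ((q, s)) 1 := by
  induction q using Int.induction_on with
  | zero => simp [Nb, NbN]
  | succ k ih =>
      have h := Nb_succ_sub (k : ℤ) s
      have hNb : Nb ((k:ℤ)+1) s = Nb (k:ℤ) s + Finsupp.single (((k:ℤ)), s) 1 := by
        rw [← h]; abel
      rw [hNb, map_add, SH_single]
      rw [show (Nb (k:ℤ) s + Finsupp.single ((k:ℤ), s) 1) -
          (SH (Nb (k:ℤ) s) + Finsupp.single (((k:ℤ)+1), s) 1)
        = (Nb (k:ℤ) s - SH (Nb (k:ℤ) s)) + Finsupp.single ((k:ℤ), s) 1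
            - Finsupp.single (((k:ℤ)+1), s) 1 by abel]
      rw [ih]
      abel
  | pred k ih =>
      have h := Nb_succ_sub (-(k:ℤ)-1) s
      rw [show (-(k:ℤ)-1) + 1 = -(k:ℤ) by ring] at h
      have hNb : Nb (-(k:ℤ)-1) s = Nb (-(k:ℤ)) s - Finsupp.single ((-(k:ℤ)-1), s) 1 := by
        rw [← h]; abel
      rw [hNb, map_sub, SH_single]
      rw [show (-(k:ℤ)-1) + 1 = -(k:ℤ) by ring]
      rw [show (Nb (-(k:ℤ)) s - Finsupp.single ((-(k:ℤ)-1), s) 1 -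
          (SH (Nb (-(k:ℤ)) s) - Finsupp.single ((-(k:ℤ), s)) 1))
        = (Nb (-(k:ℤ)) s - SH (Nb (-(k:ℤ)) s))
            + Finsupp.single ((-(k:ℤ), s)) 1 - Finsupp.single ((-(k:ℤ)-1), s) 1 by abel]
      rw [ih]
      abel


end FreeRackProof

namespace FreeRackProof
open Finsupp
variable {S : Type}

/-- Extensionality via monomials for homs out of `ℤ`-Finsupps. -/
theorem fsHomExt {α : Type*} {M : Type*} [AddCommMonoid M] {f g : (α →₀ ℤ) →+ M}
    (h : ∀ a, f (Finsupp.single a 1) = g (Finsupp.single a 1)) : f = g := by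
  apply Finsupp.addHom_ext'
  intro a
  apply AddMonoidHom.ext_int
  simpa using h a

theorem monHomExt {n : ℕ} {M : Type*} [AddCommMonoid M] {f g : CR (ℤ × S) n →+ M}
    (h : ∀ w, f (mon w) = g (mon w)) : f = g := fsHomExt h

/-- add `m` to the exponent of the first letter. -/
def headAdd (m : ℤ) {n : ℕ} (c : Fin (n+1) → ℤ × S) : Fin (n+1) → ℤ × S :=
  Fin.cons ((c 0).1 + m, (c 0).2) (Fin.tail c)

theorem headAdd_zero {n : ℕ} (c : Fin (n+1) → ℤ × S) : headAdd 0 c = c := by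
  funext j
  refine Fin.cases ?_ ?_ j <;> simp [headAdd, Fin.tail]

theorem headAdd_cons {n : ℕ} (m : ℤ) (x : ℤ × S) (w : Fin n → ℤ × S) :
    headAdd m (Fin.cons x w) = Fin.cons ((x.1 + m, x.2)) w := by
  funext j
  refine Fin.cases ?_ ?_ j <;> simp [headAdd, Fin.tail]

noncomputable def Th (m : ℤ) (n : ℕ) : CR (ℤ × S) (n+1) →+ CR (ℤ × S) (n+1) :=
  Finsupp.mapDomain.addMonoidHom (headAdd m)

theorem Th_mon (m : ℤ) (n : ℕ) (c : Fin (n+1) → ℤ × S) :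
    Th m n (mon c) = mon (headAdd m c) := by
  simp [Th, mon, Finsupp.mapDomain.addMonoidHom_apply, Finsupp.mapDomain_single]

theorem Th_zero (n : ℕ) : Th (0:ℤ) n = AddMonoidHom.id (CR (ℤ × S) (n+1)) := by
  apply monHomExt
  intro w
  simp [Th_mon, headAdd_zero]

noncomputable def La (m : ℤ) (n : ℕ) : CR (ℤ × S) (n+1) →+ CR (ℤ × S) (n+1) :=
  Th m n - Th (m+1) n

theorem Th_consHom (m : ℤ) (n : ℕ) (x : ℤ × S) :
    (Th m n).comp (consHom x n) = consHom ((x.1 + m, x.2)) n := by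
  apply monHomExt
  intro w
  simp [AddMonoidHom.comp_apply, consHom_mon, Th_mon, headAdd_cons]

theorem Th_consHom_apply (m : ℤ) (n : ℕ) (x : ℤ × S) (z : CR (ℤ × S) n) :
    Th m n (consHom x n z) = consHom ((x.1 + m, x.2)) n z :=
  DFunLike.congr_fun (Th_consHom m n x) z

/-- the element `s - s₀` of `ℤ[ℤ×S]`. -/
noncomputable def Pb (s₀ : S) (x : ℤ × S) : (ℤ × S) →₀ ℤ :=
  Finsupp.single ((0:ℤ), x.2) 1 - Finsupp.single ((0:ℤ), s₀) 1

/-- `Λ` applied coefficientwise to an element of `ℤ[ℤ×S]`. -/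
noncomputable def LaV (n : ℕ) : ((ℤ × S) →₀ ℤ) →+ (CR (ℤ × S) (n+1) →+ CR (ℤ × S) (n+1)) :=
  Finsupp.liftAddHom fun x => zmultiplesHom _ (La x.1 n)

theorem LaV_single (n : ℕ) (a : ℤ × S) : LaV n (Finsupp.single a 1) = La a.1 n := by
  simp [LaV, Finsupp.liftAddHom_apply_single]

theorem LaV_Pb (n : ℕ) (s₀ : S) (x : ℤ × S) : LaV n (Pb s₀ x) = 0 := by
  simp [Pb, map_sub, LaV_single]

theorem LaV_Nb (n : ℕ) (q : ℤ) (s : S) :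
    LaV n (Nb q s) = Th (0:ℤ) n - Th q n := by
  induction q using Int.induction_on with
  | zero => simp [Nb, NbN]
  | succ k ih =>
      have h : Nb ((k:ℤ)+1) s = Nb (k:ℤ) s + Finsupp.single (((k:ℤ)), s) 1 := by
        rw [← Nb_succ_sub (k:ℤ) s]; abel
      rw [h, map_add, ih, LaV_single, La]
      abel
  | pred k ih =>
      have h := Nb_succ_sub (-(k:ℤ)-1) s
      rw [show (-(k:ℤ)-1) + 1 = -(k:ℤ) by ring] at h
      have h2 : Nb (-(k:ℤ)-1) s = Nb (-(k:ℤ)) s - Finsupp.single ((-(k:ℤ)-1), s) 1 := by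
        rw [← h]; abel
      rw [h2, map_sub, ih, LaV_single, La]
      rw [show (-(k:ℤ)-1) + 1 = -(k:ℤ) by ring]
      abel

end FreeRackProof

namespace FreeRackProof
open Finsupp
variable {S : Type}

/-- The untwisted differential. -/
noncomputable def DU : (n : ℕ) → CR (ℤ × S) (n+1) →+ CR (ℤ × S) n
  | 0 => 0
  | (n+1) => Finsupp.liftAddHom fun w => zmultiplesHom _
      (La (w 0).1 n (mon (Fin.tail w))
        - mulChain (Finsupp.single (w 0) 1) n (DU n (mon (Fin.tail w))))

theorem DU_mon {n : ℕ} (w : Fin (n+2) → ℤ × S) :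
    DU (n+1) (mon w) = La (w 0).1 n (mon (Fin.tail w))
      - consHom (w 0) n (DU n (mon (Fin.tail w))) := by
  rw [DU, mon, Finsupp.liftAddHom_apply_single, mulChain_single]
  simp

theorem DU_consHom {n : ℕ} (a : ℤ × S) :
    (DU (n+1)).comp (consHom a (n+1)) =
      La a.1 n - (consHom a n).comp (DU n) := by
  apply monHomExt
  intro w
  simp only [AddMonoidHom.comp_apply, AddMonoidHom.sub_apply, consHom_mon, DU_mon,
    Fin.cons_zero, Fin.tail_cons]

theorem DU_consHom_apply {n : ℕ} (a : ℤ × S) (z : CR (ℤ × S) (n+1)) :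
    DU (n+1) (consHom a (n+1) z) = La a.1 n z - consHom a n (DU n z) :=
  DFunLike.congr_fun (DU_consHom a) z

theorem DU_mulChain {n : ℕ} (v : (ℤ × S) →₀ ℤ) (z : CR (ℤ × S) (n+1)) :
    DU (n+1) (mulChain v (n+1) z) = LaV n v z - mulChain v n (DU n z) := by
  have key : (DU (n+1)).comp ((MH (n+1)).flip z)
      = (LaV n).flip z - (MH n).flip (DU n z) := by
    apply fsHomExt
    intro a
    simp only [AddMonoidHom.comp_apply, AddMonoidHom.sub_apply, AddMonoidHom.flip_apply]
    rw [← mulChain_eq, ← mulChain_eq, mulChain_single, mulChain_single, LaV_single]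
    exact DU_consHom_apply a z
  have := DFunLike.congr_fun key v
  simpa [mulChain_eq, AddMonoidHom.flip_apply] using this

/-- The homotopy. -/
noncomputable def HU (s₀ : S) : (n : ℕ) → CR (ℤ × S) n →+ CR (ℤ × S) (n+1)
  | 0 => 0
  | (n+1) => Finsupp.liftAddHom fun w => zmultiplesHom _
      (-(consHom ((0:ℤ), s₀) (n+1) (mulChain (Nb (w 0).1 (w 0).2) n (mon (Fin.tail w))))
        - mulChain (Pb s₀ (w 0)) (n+1) (HU s₀ n (mon (Fin.tail w))))

theorem HU_mon (s₀ : S) {n : ℕ} (w : Fin (n+1) → ℤ × S) :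
    HU s₀ (n+1) (mon w)
      = -(consHom ((0:ℤ), s₀) (n+1) (mulChain (Nb (w 0).1 (w 0).2) n (mon (Fin.tail w))))
        - mulChain (Pb s₀ (w 0)) (n+1) (HU s₀ n (mon (Fin.tail w))) := by
  rw [HU, mon, Finsupp.liftAddHom_apply_single]
  simp

theorem HU_consHom (s₀ : S) {n : ℕ} (a : ℤ × S) :
    (HU s₀ (n+1)).comp (consHom a n) =
      -(consHom ((0:ℤ), s₀) (n+1)).comp (mulChain (Nb a.1 a.2) n)
        - (mulChain (Pb s₀ a) (n+1)).comp (HU s₀ n) := by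
  apply monHomExt
  intro w
  simp only [AddMonoidHom.comp_apply, AddMonoidHom.sub_apply, AddMonoidHom.neg_apply,
    consHom_mon, HU_mon, Fin.cons_zero, Fin.tail_cons]

theorem HU_consHom_apply (s₀ : S) {n : ℕ} (a : ℤ × S) (z : CR (ℤ × S) n) :
    HU s₀ (n+1) (consHom a n z) =
      -(consHom ((0:ℤ), s₀) (n+1) (mulChain (Nb a.1 a.2) n z))
        - mulChain (Pb s₀ a) (n+1) (HU s₀ n z) :=
  DFunLike.congr_fun (HU_consHom s₀ a) z

/-- The projection to the harmonic part. -/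
noncomputable def KU (s₀ : S) : (n : ℕ) → CR (ℤ × S) (n+1) →+ CR (ℤ × S) (n+1)
  | 0 => Finsupp.liftAddHom fun w => zmultiplesHom _
      (mon (Fin.cons ((0:ℤ), (w 0).2) (Fin.tail w)))
  | (n+1) => Finsupp.liftAddHom fun w => zmultiplesHom _
      (mulChain (Pb s₀ (w 0)) (n+1) (KU s₀ n (mon (Fin.tail w))))

theorem KU_zero_mon (s₀ : S) (w : Fin 1 → ℤ × S) :
    KU s₀ 0 (mon w) = mon (Fin.cons ((0:ℤ), (w 0).2) (Fin.tail w)) := by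
  rw [KU, mon, Finsupp.liftAddHom_apply_single]
  simp

theorem KU_mon (s₀ : S) {n : ℕ} (w : Fin (n+2) → ℤ × S) :
    KU s₀ (n+1) (mon w) = mulChain (Pb s₀ (w 0)) (n+1) (KU s₀ n (mon (Fin.tail w))) := by
  rw [KU, mon, Finsupp.liftAddHom_apply_single]
  simp

theorem KU_consHom_apply (s₀ : S) {n : ℕ} (a : ℤ × S) (z : CR (ℤ × S) (n+1)) :
    KU s₀ (n+1) (consHom a (n+1) z) = mulChain (Pb s₀ a) (n+1) (KU s₀ n z) := by
  have key : (KU s₀ (n+1)).comp (consHom a (n+1))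
      = (mulChain (Pb s₀ a) (n+1)).comp (KU s₀ n) := by
    apply monHomExt
    intro w
    simp only [AddMonoidHom.comp_apply, consHom_mon, KU_mon, Fin.cons_zero, Fin.tail_cons]
  exact DFunLike.congr_fun key z

end FreeRackProof

namespace FreeRackProof
open Finsupp
variable {S : Type}

theorem Th_mulChain {n : ℕ} (v : (ℤ × S) →₀ ℤ) (z : CR (ℤ × S) n) :
    Th 1 n (mulChain v n z) = mulChain (SH v) n z := by
  have key : (Th 1 n).comp ((MH n).flip z) = ((MH n).comp SH).flip z := by
    apply fsHomExt
    intro a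
    simp only [AddMonoidHom.comp_apply, AddMonoidHom.flip_apply]
    rw [← mulChain_eq, mulChain_single, Th_consHom_apply]
    rw [show SH (Finsupp.single a 1) = Finsupp.single ((a.1+1, a.2)) 1 from SH_single a.1 a.2]
    rw [← mulChain_eq, mulChain_single]
  have := DFunLike.congr_fun key v
  simpa [mulChain_eq, AddMonoidHom.flip_apply] using this

theorem La0_mulChain {n : ℕ} (v : (ℤ × S) →₀ ℤ) (z : CR (ℤ × S) n) :
    La 0 n (mulChain v n z) = mulChain (v - SH v) n z := by
  rw [La, AddMonoidHom.sub_apply, zero_add, Th_mulChain, mulChain_sub]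
  rw [DFunLike.congr_fun (Th_zero n) (mulChain v n z)]
  rfl

theorem HU_La (s₀ : S) {n : ℕ} (m : ℤ) :
    (HU s₀ (n+1)).comp (La m n) = (consHom ((0:ℤ), s₀) (n+1)).comp (Th m n) := by
  apply monHomExt
  intro c
  simp only [AddMonoidHom.comp_apply, La, AddMonoidHom.sub_apply, map_sub, Th_mon]
  rw [show headAdd m c = Fin.cons (((c 0).1 + m, (c 0).2)) (Fin.tail c) from rfl]
  rw [show headAdd (m+1) c = Fin.cons (((c 0).1 + (m+1), (c 0).2)) (Fin.tail c) from rfl]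
  rw [← consHom_mon, ← consHom_mon, HU_consHom_apply, HU_consHom_apply]
  have hPb : Pb s₀ (((c 0).1 + m, (c 0).2)) = Pb s₀ (((c 0).1 + (m+1), (c 0).2)) := rfl
  rw [hPb]
  have hNb : Nb ((c 0).1 + (m+1)) (c 0).2 - Nb ((c 0).1 + m) (c 0).2
      = Finsupp.single ((((c 0).1 + m), (c 0).2)) 1 := by
    rw [show (c 0).1 + (m+1) = ((c 0).1 + m) + 1 by ring]
    exact Nb_succ_sub _ _
  have expand : -(consHom ((0:ℤ), s₀) (n+1) (mulChain (Nb ((c 0).1 + m) (c 0).2) n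
        (mon (Fin.tail c))))
      - mulChain (Pb s₀ (((c 0).1 + (m+1), (c 0).2))) (n+1) (HU s₀ n (mon (Fin.tail c)))
      - (-(consHom ((0:ℤ), s₀) (n+1) (mulChain (Nb ((c 0).1 + (m+1)) (c 0).2) n
        (mon (Fin.tail c))))
      - mulChain (Pb s₀ (((c 0).1 + (m+1), (c 0).2))) (n+1) (HU s₀ n (mon (Fin.tail c))))
      = consHom ((0:ℤ), s₀) (n+1) (mulChain (Nb ((c 0).1 + (m+1)) (c 0).2) n (mon (Fin.tail c))
        - mulChain (Nb ((c 0).1 + m) (c 0).2) n (mon (Fin.tail c))) := by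
    rw [map_sub]
    abel
  rw [expand]
  congr 1
  have : mulChain (Nb ((c 0).1 + (m + 1)) (c 0).2) n (mon (Fin.tail c))
      - mulChain (Nb ((c 0).1 + m) (c 0).2) n (mon (Fin.tail c))
      = mulChain (Nb ((c 0).1 + (m + 1)) (c 0).2 - Nb ((c 0).1 + m) (c 0).2) n
          (mon (Fin.tail c)) := by
    rw [mulChain_sub]; rfl
  rw [this, hNb, mulChain_single, consHom_mon]

end FreeRackProof

namespace FreeRackProof
open Finsupp
variable {S : Type}

theorem mulChain_Pb_mon (s₀ : S) {n : ℕ} (a : ℤ × S) (z : CR (ℤ × S) n) :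
    mulChain (Pb s₀ a) n z = consHom ((0:ℤ), a.2) n z - consHom ((0:ℤ), s₀) n z := by
  rw [Pb, mulChain_sub, mulChain_single, mulChain_single]
  rfl

/-- The master identity: `D∘H + H∘D = id - K`. -/
theorem master (s₀ : S) : ∀ n : ℕ,
    (DU (n+1)).comp (HU s₀ (n+1)) + (HU s₀ n).comp (DU n)
      = AddMonoidHom.id (CR (ℤ × S) (n+1)) - KU s₀ n := by
  intro n
  induction n with
  | zero =>
      apply monHomExt
      intro w
      simp only [AddMonoidHom.add_apply, AddMonoidHom.comp_apply, AddMonoidHom.sub_apply,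
        AddMonoidHom.id_apply]
      rw [show (DU 0 : CR (ℤ × S) 1 →+ CR (ℤ × S) 0) = 0 from rfl]
      rw [show (HU s₀ 0 : CR (ℤ × S) 0 →+ CR (ℤ × S) 1) = 0 from rfl]
      simp only [AddMonoidHom.zero_apply, map_zero, add_zero]
      rw [HU_mon]
      rw [show (HU s₀ 0 : CR (ℤ × S) 0 →+ CR (ℤ × S) 1) = 0 from rfl]
      simp only [AddMonoidHom.zero_apply, map_zero, mulChain_zero]
      rw [sub_zero, map_neg, DU_consHom_apply]
      rw [show (DU 0 : CR (ℤ × S) 1 →+ CR (ℤ × S) 0) = 0 from rfl]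
      simp only [AddMonoidHom.zero_apply, map_zero, sub_zero]
      rw [La0_mulChain]
      rw [show Nb (w 0).1 (w 0).2 - SH (Nb (w 0).1 (w 0).2)
          = Finsupp.single (((0:ℤ), (w 0).2)) 1 - Finsupp.single (((w 0).1, (w 0).2)) 1
          from Nb_shift (w 0).1 (w 0).2]
      rw [show (mulChain (Finsupp.single (((0:ℤ), (w 0).2)) 1
            - Finsupp.single (((w 0).1, (w 0).2)) 1) 0) (mon (Fin.tail w))
          = mulChain (Finsupp.single (((0:ℤ), (w 0).2)) 1) 0 (mon (Fin.tail w))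
            - mulChain (Finsupp.single (((w 0).1, (w 0).2)) 1) 0 (mon (Fin.tail w)) by
        rw [mulChain_sub]; rfl]
      rw [mulChain_single, mulChain_single, consHom_mon, consHom_mon, KU_zero_mon]
      rw [show (((w 0).1, (w 0).2) : ℤ × S) = w 0 from rfl]
      rw [Fin.cons_self_tail]
      abel
  | succ n IH =>
      apply monHomExt
      intro w
      have IH' := DFunLike.congr_fun IH (mon (Fin.tail w))
      simp only [AddMonoidHom.add_apply, AddMonoidHom.comp_apply, AddMonoidHom.sub_apply,
        AddMonoidHom.id_apply] at IH' ⊢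
      have e1 : HU s₀ (n+2) (mon w)
          = -(consHom ((0:ℤ), s₀) (n+2)
              (mulChain (Nb (w 0).1 (w 0).2) (n+1) (mon (Fin.tail w))))
            - mulChain (Pb s₀ (w 0)) (n+2) (HU s₀ (n+1) (mon (Fin.tail w))) := HU_mon s₀ w
      have e3 : La 0 (n+1) (mulChain (Nb (w 0).1 (w 0).2) (n+1) (mon (Fin.tail w)))
          = consHom ((0:ℤ), (w 0).2) (n+1) (mon (Fin.tail w)) - mon w := by
        rw [La0_mulChain]
        rw [show Nb (w 0).1 (w 0).2 - SH (Nb (w 0).1 (w 0).2)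
            = Finsupp.single (((0:ℤ), (w 0).2)) 1 - Finsupp.single (((w 0).1, (w 0).2)) 1
            from Nb_shift (w 0).1 (w 0).2]
        rw [show (mulChain (Finsupp.single (((0:ℤ), (w 0).2)) 1
              - Finsupp.single (((w 0).1, (w 0).2)) 1) (n+1)) (mon (Fin.tail w))
            = mulChain (Finsupp.single (((0:ℤ), (w 0).2)) 1) (n+1) (mon (Fin.tail w))
              - mulChain (Finsupp.single (((w 0).1, (w 0).2)) 1) (n+1) (mon (Fin.tail w)) by
          rw [mulChain_sub]; rfl]
        rw [mulChain_single, mulChain_single, consHom_mon, consHom_mon]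
        rw [show (((w 0).1, (w 0).2) : ℤ × S) = w 0 from rfl, Fin.cons_self_tail]
      have e4 : DU (n+1) (mulChain (Nb (w 0).1 (w 0).2) (n+1) (mon (Fin.tail w)))
          = mon (Fin.tail w) - Th (w 0).1 n (mon (Fin.tail w))
            - mulChain (Nb (w 0).1 (w 0).2) n (DU n (mon (Fin.tail w))) := by
        rw [DU_mulChain, LaV_Nb]
        simp only [AddMonoidHom.sub_apply]
        rw [show Th (0:ℤ) n (mon (Fin.tail w)) = mon (Fin.tail w) by rw [Th_zero]; rfl]
      have e2 : DU (n+2) (consHom ((0:ℤ), s₀) (n+2)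
            (mulChain (Nb (w 0).1 (w 0).2) (n+1) (mon (Fin.tail w))))
          = (consHom ((0:ℤ), (w 0).2) (n+1) (mon (Fin.tail w)) - mon w)
            - consHom ((0:ℤ), s₀) (n+1) (mon (Fin.tail w) - Th (w 0).1 n (mon (Fin.tail w))
              - mulChain (Nb (w 0).1 (w 0).2) n (DU n (mon (Fin.tail w)))) := by
        rw [DU_consHom_apply, show (((0:ℤ), s₀) : ℤ × S).1 = (0:ℤ) from rfl, e3, e4]
      have e5 : DU (n+2) (mulChain (Pb s₀ (w 0)) (n+2) (HU s₀ (n+1) (mon (Fin.tail w))))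
          = - mulChain (Pb s₀ (w 0)) (n+1)
              (DU (n+1) (HU s₀ (n+1) (mon (Fin.tail w)))) := by
        rw [DU_mulChain, LaV_Pb]
        simp
      have e6 : DU (n+1) (mon w) = La (w 0).1 n (mon (Fin.tail w))
          - consHom (w 0) n (DU n (mon (Fin.tail w))) := DU_mon w
      have e7 : HU s₀ (n+1) (La (w 0).1 n (mon (Fin.tail w)))
          = consHom ((0:ℤ), s₀) (n+1) (Th (w 0).1 n (mon (Fin.tail w))) :=
        DFunLike.congr_fun (HU_La s₀ (w 0).1) (mon (Fin.tail w))
      have e8 : HU s₀ (n+1) (consHom (w 0) n (DU n (mon (Fin.tail w))))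
          = -(consHom ((0:ℤ), s₀) (n+1)
              (mulChain (Nb (w 0).1 (w 0).2) n (DU n (mon (Fin.tail w)))))
            - mulChain (Pb s₀ (w 0)) (n+1) (HU s₀ n (DU n (mon (Fin.tail w)))) :=
        HU_consHom_apply s₀ (w 0) _
      have hDH : DU (n+1) (HU s₀ (n+1) (mon (Fin.tail w)))
          = mon (Fin.tail w) - KU s₀ n (mon (Fin.tail w))
            - HU s₀ n (DU n (mon (Fin.tail w))) := by
        rw [← IH']; abel
      have e1' : DU (n+2) (HU s₀ (n+2) (mon w))
          = -(DU (n+2) (consHom ((0:ℤ), s₀) (n+2)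
              (mulChain (Nb (w 0).1 (w 0).2) (n+1) (mon (Fin.tail w)))))
            - DU (n+2) (mulChain (Pb s₀ (w 0)) (n+2) (HU s₀ (n+1) (mon (Fin.tail w)))) := by
        rw [e1, map_sub, map_neg]
      have e6' : HU s₀ (n+1) (DU (n+1) (mon w))
          = HU s₀ (n+1) (La (w 0).1 n (mon (Fin.tail w)))
            - HU s₀ (n+1) (consHom (w 0) n (DU n (mon (Fin.tail w)))) := by
        rw [e6, map_sub]
      have split1 : consHom ((0:ℤ), s₀) (n+1)
            (mon (Fin.tail w) - Th (w 0).1 n (mon (Fin.tail w))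
              - mulChain (Nb (w 0).1 (w 0).2) n (DU n (mon (Fin.tail w))))
          = consHom ((0:ℤ), s₀) (n+1) (mon (Fin.tail w))
            - consHom ((0:ℤ), s₀) (n+1) (Th (w 0).1 n (mon (Fin.tail w)))
            - consHom ((0:ℤ), s₀) (n+1)
                (mulChain (Nb (w 0).1 (w 0).2) n (DU n (mon (Fin.tail w)))) := by
        rw [map_sub, map_sub]
      have split2 : mulChain (Pb s₀ (w 0)) (n+1)
            (mon (Fin.tail w) - KU s₀ n (mon (Fin.tail w))
              - HU s₀ n (DU n (mon (Fin.tail w))))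
          = mulChain (Pb s₀ (w 0)) (n+1) (mon (Fin.tail w))
            - mulChain (Pb s₀ (w 0)) (n+1) (KU s₀ n (mon (Fin.tail w)))
            - mulChain (Pb s₀ (w 0)) (n+1) (HU s₀ n (DU n (mon (Fin.tail w)))) := by
        rw [map_sub, map_sub]
      rw [e1', e2, e5, e6', e7, e8, hDH, split1, split2, KU_mon, mulChain_Pb_mon]
      abel

end FreeRackProof

namespace FreeRackProof
open Finsupp
variable {S : Type}

/-- Letters different from the basepoint. -/
abbrev Sne (s₀ : S) := {s : S // s ≠ s₀}

/-- Index type for the homology basis in degree `n+1`. -/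
abbrev W (s₀ : S) (n : ℕ) := (Fin n → Sne s₀) × S

def consW {s₀ : S} {n : ℕ} (s' : Sne s₀) (p : W s₀ n) : W s₀ (n+1) :=
  (Fin.cons s' p.1, p.2)

variable [DecidableEq S]

noncomputable def rU (s₀ : S) : (n : ℕ) → CR (ℤ × S) (n+1) →+ ((W s₀ n) →₀ ℤ)
  | 0 => Finsupp.liftAddHom fun w => zmultiplesHom _
      (Finsupp.single (((Fin.elim0 : Fin 0 → Sne s₀), (w 0).2) : W s₀ 0) 1)
  | (n+1) => Finsupp.liftAddHom fun w => zmultiplesHom _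
      (if h : (w 0).2 ≠ s₀ then
        Finsupp.mapDomain (consW (⟨(w 0).2, h⟩ : Sne s₀)) (rU s₀ n (mon (Fin.tail w)))
      else 0)

noncomputable def iU (s₀ : S) : (n : ℕ) → ((W s₀ n) →₀ ℤ) →+ CR (ℤ × S) (n+1)
  | 0 => Finsupp.liftAddHom fun p => zmultiplesHom _ (mon (fun _ => ((0:ℤ), p.2)))
  | (n+1) => Finsupp.liftAddHom fun p => zmultiplesHom _
      (mulChain (Pb s₀ ((0:ℤ), (p.1 0).1)) (n+1)
        (iU s₀ n (Finsupp.single ((Fin.tail p.1, p.2) : W s₀ n) 1)))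

theorem rU_zero_mon (s₀ : S) (w : Fin 1 → ℤ × S) :
    rU s₀ 0 (mon w) = Finsupp.single (((Fin.elim0 : Fin 0 → Sne s₀), (w 0).2) : W s₀ 0) 1 := by
  rw [rU, mon, Finsupp.liftAddHom_apply_single]; simp

theorem rU_mon (s₀ : S) {n : ℕ} (w : Fin (n+2) → ℤ × S) :
    rU s₀ (n+1) (mon w) = (if h : (w 0).2 ≠ s₀ then
        Finsupp.mapDomain (consW (⟨(w 0).2, h⟩ : Sne s₀)) (rU s₀ n (mon (Fin.tail w)))
      else 0) := by
  rw [rU, mon, Finsupp.liftAddHom_apply_single]; simp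

theorem iU_zero_single (s₀ : S) (p : W s₀ 0) :
    iU s₀ 0 (Finsupp.single p 1) = mon (fun _ => ((0:ℤ), p.2)) := by
  rw [iU, Finsupp.liftAddHom_apply_single]; simp

theorem iU_single (s₀ : S) {n : ℕ} (p : W s₀ (n+1)) :
    iU s₀ (n+1) (Finsupp.single p 1)
      = mulChain (Pb s₀ ((0:ℤ), (p.1 0).1)) (n+1)
          (iU s₀ n (Finsupp.single ((Fin.tail p.1, p.2) : W s₀ n) 1)) := by
  rw [iU, Finsupp.liftAddHom_apply_single]; simp

theorem rU_consHom_ne (s₀ : S) {n : ℕ} (a : ℤ × S) (h : a.2 ≠ s₀) :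
    (rU s₀ (n+1)).comp (consHom a (n+1))
      = (Finsupp.mapDomain.addMonoidHom (consW (⟨a.2, h⟩ : Sne s₀))).comp (rU s₀ n) := by
  apply monHomExt
  intro w
  simp only [AddMonoidHom.comp_apply, consHom_mon, rU_mon, Fin.cons_zero, Fin.tail_cons,
    Finsupp.mapDomain.addMonoidHom_apply, dif_pos h]

theorem rU_consHom_eq (s₀ : S) {n : ℕ} (a : ℤ × S) (h : a.2 = s₀) :
    (rU s₀ (n+1)).comp (consHom a (n+1)) = 0 := by
  apply monHomExt
  intro w
  simp only [AddMonoidHom.comp_apply, consHom_mon, rU_mon, Fin.cons_zero, Fin.tail_cons,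
    AddMonoidHom.zero_apply]
  rw [dif_neg (by simp [h])]

theorem rU_Th (s₀ : S) {n : ℕ} (m : ℤ) :
    (rU s₀ n).comp (Th m n) = rU s₀ n := by
  apply monHomExt
  intro c
  cases n with
  | zero =>
      simp only [AddMonoidHom.comp_apply, Th_mon, rU_zero_mon]
      congr 1
  | succ n =>
      simp only [AddMonoidHom.comp_apply, Th_mon, rU_mon, headAdd, Fin.cons_zero,
        Fin.tail_cons]

theorem rU_Th_apply (s₀ : S) {n : ℕ} (m : ℤ) (z : CR (ℤ × S) (n+1)) :
    rU s₀ n (Th m n z) = rU s₀ n z := DFunLike.congr_fun (rU_Th s₀ m) z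

theorem iU_mapDomain (s₀ : S) {n : ℕ} (s' : Sne s₀) :
    (iU s₀ (n+1)).comp (Finsupp.mapDomain.addMonoidHom (consW s'))
      = (mulChain (Pb s₀ ((0:ℤ), s'.1)) (n+1)).comp (iU s₀ n) := by
  apply fsHomExt
  intro p
  simp only [AddMonoidHom.comp_apply, Finsupp.mapDomain.addMonoidHom_apply,
    Finsupp.mapDomain_single]
  rw [iU_single]
  simp only [consW, Fin.cons_zero, Fin.tail_cons, Prod.mk.eta]

/-- `ρ ∘ ι = id`. -/
theorem rU_iU (s₀ : S) : ∀ n : ℕ,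
    (rU s₀ n).comp (iU s₀ n) = AddMonoidHom.id _ := by
  intro n
  induction n with
  | zero =>
      apply fsHomExt
      intro p
      simp only [AddMonoidHom.comp_apply, AddMonoidHom.id_apply, iU_zero_single, rU_zero_mon]
      congr 1
      exact Prod.ext (funext fun i => i.elim0) rfl
  | succ n IH =>
      apply fsHomExt
      intro p
      simp only [AddMonoidHom.comp_apply, AddMonoidHom.id_apply, iU_single]
      rw [mulChain_Pb_mon]
      rw [map_sub]
      rw [show rU s₀ (n+1) (consHom ((0:ℤ), s₀) (n+1)
            (iU s₀ n (Finsupp.single ((Fin.tail p.1, p.2) : W s₀ n) 1))) = 0 from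
        DFunLike.congr_fun (rU_consHom_eq s₀ ((0:ℤ), s₀) rfl) _]
      rw [sub_zero]
      rw [show rU s₀ (n+1) (consHom ((0:ℤ), (p.1 0).1) (n+1)
            (iU s₀ n (Finsupp.single ((Fin.tail p.1, p.2) : W s₀ n) 1)))
          = Finsupp.mapDomain (consW (⟨(p.1 0).1, (p.1 0).2⟩ : Sne s₀))
              (rU s₀ n (iU s₀ n (Finsupp.single ((Fin.tail p.1, p.2) : W s₀ n) 1))) from
        DFunLike.congr_fun (rU_consHom_ne s₀ ((0:ℤ), (p.1 0).1) (p.1 0).2) _]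
      rw [show rU s₀ n (iU s₀ n (Finsupp.single ((Fin.tail p.1, p.2) : W s₀ n) 1))
          = Finsupp.single ((Fin.tail p.1, p.2) : W s₀ n) 1 from
        DFunLike.congr_fun IH _]
      rw [Finsupp.mapDomain_single]
      congr 1
      show consW (p.1 0) (Fin.tail p.1, p.2) = p
      exact Prod.ext (Fin.cons_self_tail p.1) rfl

/-- `D ∘ ι = 0`. -/
theorem DU_iU (s₀ : S) : ∀ n : ℕ, (DU n).comp (iU s₀ n) = 0 := by
  intro n
  induction n with
  | zero => rfl
  | succ n IH =>
      apply fsHomExt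
      intro p
      simp only [AddMonoidHom.comp_apply, AddMonoidHom.zero_apply, iU_single]
      rw [DU_mulChain, LaV_Pb]
      rw [show DU n (iU s₀ n (Finsupp.single ((Fin.tail p.1, p.2) : W s₀ n) 1)) = 0 from
        DFunLike.congr_fun IH _]
      simp

/-- `ρ ∘ D = 0`. -/
theorem rU_DU (s₀ : S) : ∀ n : ℕ, (rU s₀ n).comp (DU (n+1)) = 0 := by
  intro n
  induction n with
  | zero =>
      apply monHomExt
      intro w
      simp only [AddMonoidHom.comp_apply, AddMonoidHom.zero_apply]
      rw [DU_mon, map_sub]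
      rw [show (DU 0 : CR (ℤ × S) 1 →+ CR (ℤ × S) 0) = 0 from rfl]
      simp only [AddMonoidHom.zero_apply, map_zero, sub_zero]
      rw [La, AddMonoidHom.sub_apply, map_sub, rU_Th_apply, rU_Th_apply, sub_self]
  | succ n IH =>
      apply monHomExt
      intro w
      simp only [AddMonoidHom.comp_apply, AddMonoidHom.zero_apply]
      rw [DU_mon, map_sub, La, AddMonoidHom.sub_apply, map_sub, rU_Th_apply, rU_Th_apply,
        sub_self, zero_sub, neg_eq_zero]
      by_cases h : (w 0).2 = s₀
      · exact DFunLike.congr_fun (rU_consHom_eq s₀ (w 0) h) _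
      · rw [show rU s₀ (n+1) (consHom (w 0) (n+1) (DU (n+1) (mon (Fin.tail w))))
            = Finsupp.mapDomain (consW (⟨(w 0).2, h⟩ : Sne s₀))
                (rU s₀ n (DU (n+1) (mon (Fin.tail w)))) from
          DFunLike.congr_fun (rU_consHom_ne s₀ (w 0) h) _]
        rw [show rU s₀ n (DU (n+1) (mon (Fin.tail w))) = 0 from DFunLike.congr_fun IH _]
        simp

/-- `K = ι ∘ ρ`. -/
theorem KU_eq (s₀ : S) : ∀ n : ℕ, KU s₀ n = (iU s₀ n).comp (rU s₀ n) := by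
  intro n
  induction n with
  | zero =>
      apply monHomExt
      intro w
      simp only [AddMonoidHom.comp_apply, KU_zero_mon, rU_zero_mon]
      rw [iU_zero_single]
      congr 1
      funext j
      refine Fin.cases rfl (fun i => i.elim0) j
  | succ n IH =>
      apply monHomExt
      intro w
      simp only [AddMonoidHom.comp_apply, KU_mon, rU_mon]
      by_cases h : (w 0).2 ≠ s₀
      · rw [dif_pos h]
        rw [show iU s₀ (n+1) (Finsupp.mapDomain (consW (⟨(w 0).2, h⟩ : Sne s₀))
              (rU s₀ n (mon (Fin.tail w))))
            = mulChain (Pb s₀ ((0:ℤ), (w 0).2)) (n+1)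
                (iU s₀ n (rU s₀ n (mon (Fin.tail w)))) from
          DFunLike.congr_fun (iU_mapDomain s₀ (⟨(w 0).2, h⟩ : Sne s₀)) _]
        rw [IH]
        rfl
      · rw [dif_neg h, map_zero]
        push_neg at h
        rw [show Pb s₀ (w 0) = 0 by simp [Pb, h]]
        rw [mulChain_zero]
        rfl

end FreeRackProof

namespace FreeRackProof
open Finsupp
variable {S : Type}

def addExp (m : ℤ) {n : ℕ} (w : Fin n → ℤ × S) : Fin n → ℤ × S :=
  fun j => ((w j).1 + m, (w j).2)

theorem addExp_zero {n : ℕ} (w : Fin n → ℤ × S) : addExp 0 w = w := by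
  funext j; simp [addExp]

theorem addExp_addExp (m k : ℤ) {n : ℕ} (w : Fin n → ℤ × S) :
    addExp m (addExp k w) = addExp (k + m) w := by
  funext j; simp [addExp, add_assoc]

theorem addExp_cons (m : ℤ) {n : ℕ} (x : ℤ × S) (w : Fin n → ℤ × S) :
    addExp m (Fin.cons x w) = Fin.cons ((x.1 + m, x.2)) (addExp m w) := by
  funext j
  refine Fin.cases ?_ ?_ j <;> simp [addExp]

noncomputable def Xi (m : ℤ) (n : ℕ) : CR (ℤ × S) n →+ CR (ℤ × S) n :=
  Finsupp.mapDomain.addMonoidHom (addExp m)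

theorem Xi_mon (m : ℤ) {n : ℕ} (w : Fin n → ℤ × S) :
    Xi m n (mon w) = mon (addExp m w) := by
  simp [Xi, mon, Finsupp.mapDomain.addMonoidHom_apply, Finsupp.mapDomain_single]

theorem del_zero {n : ℕ} (w : Fin (n+2) → ℤ × S) : del w (0 : Fin (n+1)) = Fin.tail w := by
  funext j
  simp [del, Fin.tail]

theorem act_zero {n : ℕ} (w : Fin (n+2) → ℤ × S) :
    act (shiftOp S) w (0 : Fin (n+1)) = addExp 1 (Fin.tail w) := by
  funext j
  simp [act, shiftOp, addExp, Fin.tail]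

theorem del_succ {n : ℕ} (w : Fin (n+2) → ℤ × S) (i : Fin n) :
    del w i.succ = Fin.cons (w 0) (del (Fin.tail w) i) := by
  funext j
  refine Fin.cases ?_ ?_ j
  · show del w i.succ 0 = w 0
    simp [del]
  · intro k
    show del w i.succ k.succ = del (Fin.tail w) i k
    simp only [del, Fin.val_succ, Fin.tail]
    by_cases h : (k : ℕ) < (i : ℕ)
    · rw [if_pos (by omega), if_pos h, ← Fin.succ_castSucc]
    · rw [if_neg (by omega), if_neg h]

theorem act_succ {n : ℕ} (op : ℤ × S → ℤ × S → ℤ × S) (w : Fin (n+2) → ℤ × S) (i : Fin n) :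
    act op w i.succ = Fin.cons (w 0) (act op (Fin.tail w) i) := by
  funext j
  refine Fin.cases ?_ ?_ j
  · show act op w i.succ 0 = w 0
    simp [act]
  · intro k
    show act op w i.succ k.succ = act op (Fin.tail w) i k
    simp only [act, Fin.val_succ, Fin.tail]
    by_cases h : (k : ℕ) < (i : ℕ)
    · rw [if_pos (by omega), if_pos h, ← Fin.succ_castSucc]
    · rw [if_neg (by omega), if_neg h, ← Fin.succ_castSucc]

theorem dRec {n : ℕ} (w : Fin (n+2) → ℤ × S) :
    dMon (shiftOp S) w = mon (Fin.tail w) - Xi 1 (n+1) (mon (Fin.tail w))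
      - consHom (w 0) n (dMon (shiftOp S) (Fin.tail w)) := by
  rw [dMon, Fin.sum_univ_succ]
  simp only [Fin.val_zero, pow_zero, one_smul, Fin.val_succ]
  rw [del_zero, act_zero, ← Xi_mon]
  have : ∀ i : Fin n, ((-1:ℤ)) ^ ((i:ℕ)+1) • (mon (del w i.succ) - mon (act (shiftOp S) w i.succ))
      = -(((-1:ℤ)) ^ (i:ℕ) • (consHom (w 0) n (mon (del (Fin.tail w) i) - mon (act (shiftOp S) (Fin.tail w) i)))) := by
    intro i
    rw [del_succ, act_succ, pow_succ]
    rw [map_sub, consHom_mon, consHom_mon]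
    rw [show ((-1:ℤ)) ^ (i:ℕ) * -1 = -((-1:ℤ)^(i:ℕ)) by ring]
    rw [neg_smul]
  rw [Finset.sum_congr rfl (fun i _ => this i)]
  rw [Finset.sum_neg_distrib]
  rw [show ∑ i : Fin n, ((-1:ℤ)) ^ (i:ℕ) • (consHom (w 0) n (mon (del (Fin.tail w) i) - mon (act (shiftOp S) (Fin.tail w) i)))
      = consHom (w 0) n (dMon (shiftOp S) (Fin.tail w)) by
    rw [dMon, map_sum]
    exact Finset.sum_congr rfl (fun i _ => (map_zsmul _ _ _).symm)]
  abel

theorem del_addExp {n : ℕ} (m : ℤ) (w : Fin (n+1) → ℤ × S) (i : Fin n) :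
    del (addExp m w) i = addExp m (del w i) := by
  funext j
  simp only [del, addExp]
  by_cases h : (j : ℕ) < (i : ℕ) <;> simp [h]

theorem act_addExp {n : ℕ} (m : ℤ) (w : Fin (n+1) → ℤ × S) (i : Fin n) :
    act (shiftOp S) (addExp m w) i = addExp m (act (shiftOp S) w i) := by
  funext j
  simp only [act, addExp, shiftOp]
  by_cases h : (j : ℕ) < (i : ℕ) <;> simp [h]
  ring

theorem dXi {n : ℕ} (m : ℤ) (w : Fin (n+1) → ℤ × S) :
    dMon (shiftOp S) (addExp m w) = Xi m n (dMon (shiftOp S) w) := by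
  rw [dMon, dMon, map_sum]
  refine Finset.sum_congr rfl (fun i _ => ?_)
  rw [map_zsmul, map_sub, Xi_mon, Xi_mon, del_addExp, act_addExp]

end FreeRackProof

namespace FreeRackProof
open Finsupp
variable {S : Type}

/-- partial-sum change of variables. -/
def bf : {n : ℕ} → (Fin n → ℤ × S) → (Fin n → ℤ × S)
  | 0, _ => Fin.elim0
  | (_+1), u => Fin.cons (u 0) (addExp (u 0).1 (bf (Fin.tail u)))

def bg : {n : ℕ} → (Fin n → ℤ × S) → (Fin n → ℤ × S)
  | 0, _ => Fin.elim0
  | (_+1), w => Fin.cons (w 0) (bg (addExp (-(w 0).1) (Fin.tail w)))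

theorem bg_bf : ∀ {n : ℕ} (u : Fin n → ℤ × S), bg (bf u) = u := by
  intro n
  induction n with
  | zero => intro u; funext j; exact j.elim0
  | succ n IH =>
      intro u
      show Fin.cons ((bf u) 0) (bg (addExp (-((bf u) 0).1) (Fin.tail (bf u)))) = u
      rw [show bf u = Fin.cons (u 0) (addExp (u 0).1 (bf (Fin.tail u))) from rfl]
      rw [Fin.cons_zero, Fin.tail_cons, addExp_addExp]
      rw [show ((u 0).1 + -(u 0).1 : ℤ) = 0 by ring, addExp_zero, IH]
      exact Fin.cons_self_tail u

theorem bf_bg : ∀ {n : ℕ} (w : Fin n → ℤ × S), bf (bg w) = w := by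
  intro n
  induction n with
  | zero => intro w; funext j; exact j.elim0
  | succ n IH =>
      intro w
      show Fin.cons ((bg w) 0) (addExp ((bg w) 0).1 (bf (Fin.tail (bg w)))) = w
      rw [show bg w = Fin.cons (w 0) (bg (addExp (-(w 0).1) (Fin.tail w))) from rfl]
      rw [Fin.cons_zero, Fin.tail_cons, IH, addExp_addExp]
      rw [show (-(w 0).1 + (w 0).1 : ℤ) = 0 by ring, addExp_zero]
      exact Fin.cons_self_tail w

/-- the change of variables as an `Equiv`. -/
def bE (S : Type) (n : ℕ) : (Fin n → ℤ × S) ≃ (Fin n → ℤ × S) :=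
  ⟨bf, bg, bg_bf, bf_bg⟩

/-- the untwisting isomorphism on chains. -/
noncomputable def Phi (S : Type) (n : ℕ) : CR (ℤ × S) n ≃+ CR (ℤ × S) n :=
  Finsupp.domCongr (bE S n)

theorem Phi_mon (n : ℕ) (w : Fin n → ℤ × S) :
    Phi S n (mon w) = mon (bf w) := by
  simp [Phi, mon, bE, Finsupp.domCongr_apply, Finsupp.equivMapDomain_single]

theorem bf_cons {n : ℕ} (x : ℤ × S) (y : Fin n → ℤ × S) :
    bf (Fin.cons x y) = Fin.cons x (addExp x.1 (bf y)) := rfl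

theorem bf_headAdd {n : ℕ} (m : ℤ) (c : Fin (n+1) → ℤ × S) :
    bf (headAdd m c) = addExp m (bf c) := by
  rw [show headAdd m c = Fin.cons (((c 0).1 + m, (c 0).2)) (Fin.tail c) from rfl, bf_cons]
  conv_rhs => rw [← Fin.cons_self_tail c, bf_cons, addExp_cons]
  rw [addExp_addExp]

/-- The conjugation: `d ∘ Φ = Φ ∘ D` on monomials. -/
theorem conj : ∀ (n : ℕ) (w : Fin (n+1) → ℤ × S),
    d (shiftOp S) n (Phi S (n+1) (mon w)) = Phi S n (DU n (mon w)) := by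
  intro n
  induction n with
  | zero =>
      intro w
      rw [show (DU 0 : CR (ℤ × S) 1 →+ CR (ℤ × S) 0) = 0 from rfl]
      rw [Phi_mon, d_mon]
      simp only [AddMonoidHom.zero_apply, map_zero]
      simp [dMon]
  | succ n IH =>
      intro w
      rw [Phi_mon, d_mon]
      rw [show bf w = Fin.cons (w 0) (addExp (w 0).1 (bf (Fin.tail w))) from
        by rw [← bf_cons, Fin.cons_self_tail]]
      rw [dRec]
      rw [Fin.cons_zero, Fin.tail_cons]
      rw [DU_mon, map_sub]
      -- Λ part
      have hLa : Phi S (n+1) (La (w 0).1 n (mon (Fin.tail w)))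
          = mon (addExp (w 0).1 (bf (Fin.tail w)))
            - Xi 1 (n+1) (mon (addExp (w 0).1 (bf (Fin.tail w)))) := by
        rw [La, AddMonoidHom.sub_apply, map_sub, Th_mon, Th_mon, Phi_mon, Phi_mon,
          bf_headAdd, bf_headAdd, Xi_mon, addExp_addExp]
      -- cons part
      have hcons : Phi S (n+1) (consHom (w 0) n (DU n (mon (Fin.tail w))))
          = consHom (w 0) n (Xi (w 0).1 n (Phi S n (DU n (mon (Fin.tail w))))) := by
        have key : (Phi S (n+1)).toAddMonoidHom.comp (consHom (w 0) n)
            = (consHom (w 0) n).comp ((Xi (w 0).1 n).comp (Phi S n).toAddMonoidHom) := by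
          apply monHomExt
          intro y
          simp only [AddMonoidHom.comp_apply, AddEquiv.coe_toAddMonoidHom, consHom_mon,
            Phi_mon, Xi_mon, bf_cons, consHom_mon]
        exact DFunLike.congr_fun key (DU n (mon (Fin.tail w)))
      rw [hLa, hcons]
      -- IH and commuting Xi with d
      have hXi : consHom (w 0) n (Xi (w 0).1 n (Phi S n (DU n (mon (Fin.tail w)))))
          = consHom (w 0) n (dMon (shiftOp S) (addExp (w 0).1 (bf (Fin.tail w)))) := by
        congr 1
        rw [← IH (Fin.tail w), Phi_mon, d_mon, ← dXi]
      rw [hXi]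

end FreeRackProof

namespace FreeRackProof
open Finsupp
variable {S : Type}

theorem conj_hom (n : ℕ) :
    (d (shiftOp S) n).comp (Phi S (n+1)).toAddMonoidHom
      = (Phi S n).toAddMonoidHom.comp (DU n) := by
  apply monHomExt
  intro w
  simpa using conj n w

theorem conj_apply (n : ℕ) (z : CR (ℤ × S) (n+1)) :
    d (shiftOp S) n (Phi S (n+1) z) = Phi S n (DU n z) :=
  DFunLike.congr_fun (conj_hom n) z

theorem conj_symm (n : ℕ) (x : CR (ℤ × S) (n+1)) :
    (Phi S n).symm (d (shiftOp S) n x) = DU n ((Phi S (n+1)).symm x) := by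
  apply (Phi S n).injective
  rw [AddEquiv.apply_symm_apply, ← conj_apply, AddEquiv.apply_symm_apply]

variable [DecidableEq S]

/-- The homology projection map, defined on cycles. -/
noncomputable def fh (s₀ : S) (n : ℕ) :
    (ZC (shiftOp S) (n+1)) →+ ((W s₀ n) →₀ ℤ) :=
  (rU s₀ n).comp ((((Phi S (n+1)).symm.toAddMonoidHom)).comp
    (AddSubgroup.subtype (ZC (shiftOp S) (n+1))))

theorem fh_surjective (s₀ : S) (n : ℕ) : Function.Surjective (fh s₀ n) := by
  intro y
  have hmem : Phi S (n+1) (iU s₀ n y) ∈ ZC (shiftOp S) (n+1) := by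
    show Phi S (n+1) (iU s₀ n y) ∈ (d (shiftOp S) n).ker
    rw [AddMonoidHom.mem_ker, conj_apply]
    rw [show DU n (iU s₀ n y) = 0 from DFunLike.congr_fun (DU_iU s₀ n) y]
    exact map_zero _
  refine ⟨⟨Phi S (n+1) (iU s₀ n y), hmem⟩, ?_⟩
  show rU s₀ n ((Phi S (n+1)).symm (Phi S (n+1) (iU s₀ n y))) = y
  rw [AddEquiv.symm_apply_apply]
  exact DFunLike.congr_fun (rU_iU s₀ n) y

theorem fh_ker (s₀ : S) (n : ℕ) :
    (fh s₀ n).ker = (BC (shiftOp S) (n+1)).addSubgroupOf (ZC (shiftOp S) (n+1)) := by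
  ext c
  rw [AddMonoidHom.mem_ker, AddSubgroup.mem_addSubgroupOf]
  constructor
  · intro hf
    have hc : d (shiftOp S) n (c : CR (ℤ × S) (n+1)) = 0 := c.2
    have hDu : DU n ((Phi S (n+1)).symm (c : CR (ℤ × S) (n+1))) = 0 := by
      rw [← conj_symm, hc, map_zero]
    have hM := DFunLike.congr_fun (master s₀ n) ((Phi S (n+1)).symm (c : CR (ℤ × S) (n+1)))
    simp only [AddMonoidHom.add_apply, AddMonoidHom.comp_apply, AddMonoidHom.sub_apply,
      AddMonoidHom.id_apply] at hM
    rw [hDu, map_zero, add_zero] at hM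
    have hK : KU s₀ n ((Phi S (n+1)).symm (c : CR (ℤ × S) (n+1))) = 0 := by
      rw [KU_eq]
      have : rU s₀ n ((Phi S (n+1)).symm (c : CR (ℤ × S) (n+1))) = 0 := hf
      simp only [AddMonoidHom.comp_apply, this, map_zero]
    rw [hK, sub_zero] at hM
    refine ⟨Phi S (n+2) (HU s₀ (n+1) ((Phi S (n+1)).symm (c : CR (ℤ × S) (n+1)))), ?_⟩
    rw [conj_apply, hM, AddEquiv.apply_symm_apply]
  · rintro ⟨x, hx⟩
    show rU s₀ n ((Phi S (n+1)).symm (c : CR (ℤ × S) (n+1))) = 0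
    rw [← hx, conj_symm]
    exact DFunLike.congr_fun (rU_DU s₀ n) ((Phi S (n+2)).symm x)

end FreeRackProof


open FreeRackProof in
/-- The free permutation rack on a finite set of `r` orbits has free abelian rack
homology, of rank `r(r−1)^{n−1} = (r−1)^n + (r−1)^{n−1}` in each degree `n ≥ 1`. -/
theorem free_rack_betti (S : Type) [Fintype S] (r : ℕ) (hr : Fintype.card S = r) (n : ℕ) :
    Nonempty (HR (ℤ × S) (shiftOp S) (n+1) ≃+ (Fin (r * (r-1)^n) → ℤ)) ∧
      (r : ℤ) * ((r : ℤ) - 1) ^ n = ((r : ℤ) - 1) ^ (n+1) + ((r : ℤ) - 1) ^ n := by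
  constructor
  · rcases Nat.eq_zero_or_pos r with hr0 | hrpos
    · subst hr0
      haveI hSempty : IsEmpty S := Fintype.card_eq_zero_iff.mp hr
      haveI : IsEmpty (ℤ × S) := ⟨fun p => isEmptyElim p.2⟩
      haveI : IsEmpty (Fin (n+1) → ℤ × S) := ⟨fun f => isEmptyElim (f 0)⟩
      haveI hCR : Subsingleton (CR (ℤ × S) (n+1)) :=
        ⟨fun a b => Finsupp.ext fun x => isEmptyElim x⟩
      haveI hZ : Subsingleton (ZC (shiftOp S) (n+1)) :=
        ⟨fun a b => Subtype.ext (Subsingleton.elim _ _)⟩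
      haveI hH : Subsingleton (HR (ℤ × S) (shiftOp S) (n+1)) := by
        constructor
        rintro ⟨a⟩ ⟨b⟩
        exact congrArg _ (Subsingleton.elim a b)
      haveI hF : Subsingleton (Fin (0 * (0-1)^n) → ℤ) :=
        ⟨fun a b => funext fun i => absurd i.2 (by simp)⟩
      exact ⟨{ toFun := fun _ => 0, invFun := fun _ => 0,
               left_inv := fun x => Subsingleton.elim _ _,
               right_inv := fun x => Subsingleton.elim _ _,
               map_add' := fun _ _ => Subsingleton.elim _ _ }⟩
    · haveI : DecidableEq S := Classical.decEq S
      obtain ⟨s₀⟩ : Nonempty S := Fintype.card_pos_iff.mp (hr ▸ hrpos)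
      have e1 : HR (ℤ × S) (shiftOp S) (n+1) ≃+ ((W s₀ n) →₀ ℤ) :=
        (QuotientAddGroup.quotientAddEquivOfEq (fh_ker s₀ n).symm).trans
          (QuotientAddGroup.quotientKerEquivOfSurjective (fh s₀ n) (fh_surjective s₀ n))
      have h1 : Fintype.card (Sne s₀) = r - 1 := by
        have h := Fintype.card_subtype_compl (fun s : S => s = s₀)
        simp only [Fintype.card_subtype_eq, hr] at h
        convert h using 2
      have h2 : Fintype.card (W s₀ n) = r * (r-1)^n := by
        have hprod : Fintype.card (W s₀ n)
            = Fintype.card (Fin n → Sne s₀) * Fintype.card S := Fintype.card_prod _ _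
        rw [hprod, Fintype.card_fun, Fintype.card_fin, h1, hr, mul_comm]
      have e2 : ((W s₀ n) →₀ ℤ) ≃+ (Fin (r * (r-1)^n) → ℤ) :=
        Finsupp.addEquivFunOnFinite.trans
          (AddEquiv.arrowCongr (Fintype.equivFinOfCardEq h2) (AddEquiv.refl ℤ))
      exact ⟨e1.trans e2⟩
  · ring
end
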